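/- arXiv:1305.4743 — 4 statements merged into one kernel-verified Lean document; each statement's English description precedes it below -/
import Mathlib

section
/- For any positive integer k and any integer m with 1 ≤ m ≤ k, the improper integral over the real line of sin(u)^{2k} / u^{2m} du equals (π · (-1/4)^{k-m} / (2m-1)!) · Σ_{i=0}^{k-1} (-1)^i · C(2k, i) · (k-i)^{2m-1}. -/
open Real MeasureTheory Finset

section auxDTI
open Set Filter

lemma aux_int_pow_exp (n : ℕ) {c : ℝ} (hc : 0 < c) :
    IntegrableOn (fun t : ℝ => t ^ n * Real.exp (-(c * t))) (Set.Ioi 0) := by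
  have h := Real.GammaIntegral_convergent (s := (n : ℝ) + 1) (by positivity)
  have h' : IntegrableOn (fun x : ℝ => x ^ n * Real.exp (-x)) (Set.Ioi 0) := by
    refine h.congr_fun (fun x hx => ?_) measurableSet_Ioi
    rw [add_sub_cancel_right]; beta_reduce; rw [Real.rpow_natCast, mul_comm]
  have h2 := (integrableOn_Ioi_comp_mul_left_iff (fun x : ℝ => x ^ n * Real.exp (-x)) 0 hc).mpr
    (by simpa using h')
  have h3 : IntegrableOn (fun x : ℝ => ((c:ℝ)^n)⁻¹ * ((c*x) ^ n * Real.exp (-(c*x)))) (Set.Ioi 0) :=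
    h2.const_mul _
  refine h3.congr_fun (fun x hx => ?_) measurableSet_Ioi
  field_simp [mul_pow]
  ring

lemma aux_val_pow_exp (n : ℕ) {c : ℝ} (hc : 0 < c) :
    ∫ t in Set.Ioi (0:ℝ), t ^ n * Real.exp (-(c * t)) = n.factorial / c ^ (n + 1) := by
  have h := Real.integral_rpow_mul_exp_neg_mul_Ioi (a := (n : ℝ) + 1) (r := c) (by positivity) hc
  rw [show ((n : ℝ) + 1) - 1 = (n : ℝ) by ring] at h
  have e1 : ∀ t ∈ Set.Ioi (0:ℝ), t ^ (n : ℝ) * Real.exp (-(c * t)) = t ^ n * Real.exp (-(c * t)) := by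
    intro t ht; rw [Real.rpow_natCast]
  rw [setIntegral_congr_fun measurableSet_Ioi e1] at h
  rw [h, Real.Gamma_nat_eq_factorial, show ((n:ℝ)+1) = ((n+1:ℕ):ℝ) by push_cast; ring,
    Real.rpow_natCast]
  rw [div_pow, one_pow]
  field_simp

-- integrability of the main integrand
lemma aux_int_main {k m : ℕ} (hm : 1 ≤ m) (hmk : m ≤ k) :
    Integrable (fun u : ℝ => Real.sin u ^ (2 * k) / u ^ (2 * m)) := by
  have hmeas : AEStronglyMeasurable (fun u : ℝ => Real.sin u ^ (2 * k) / u ^ (2 * m))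
      (volume : Measure ℝ) :=
    ((Real.measurable_sin.pow_const _).div (measurable_id.pow_const _)).aestronglyMeasurable
  have hint : Integrable (fun u : ℝ => 2 * (1 + u ^ 2)⁻¹) :=
    integrable_inv_one_add_sq.const_mul 2
  refine hint.mono' hmeas (Filter.Eventually.of_forall fun u => ?_)
  have h1 : (0:ℝ) < 1 + u ^ 2 := by positivity
  have hsin : |Real.sin u| ≤ 1 := Real.abs_sin_le_one u
  rw [Real.norm_eq_abs, abs_div, abs_pow, abs_pow]
  rcases le_or_gt (|u|) 1 with hu | hu
  · rcases eq_or_ne u 0 with rfl | hu0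
    · rw [abs_zero, zero_pow (by omega : 2*m ≠ 0), div_zero]
      positivity
    · have hu0' : (0:ℝ) < |u| ^ (2*m) := by positivity
      have h2 : |Real.sin u| ^ (2 * k) ≤ |u| ^ (2 * k) :=
        pow_le_pow_left₀ (abs_nonneg _) Real.abs_sin_le_abs _
      have h3 : |u| ^ (2 * k) ≤ |u| ^ (2 * m) :=
        pow_le_pow_of_le_one (abs_nonneg _) hu (by omega)
      have h4 : |Real.sin u| ^ (2*k) / |u| ^ (2*m) ≤ 1 :=
        (div_le_one hu0').mpr (h2.trans h3)
      have h5 : u^2 ≤ 1 := by nlinarith [sq_abs u, abs_nonneg u]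
      refine h4.trans ?_
      rw [le_mul_inv_iff₀ h1]
      nlinarith
  · have hu2 : (1:ℝ) ≤ |u|^2 := by nlinarith
    have h3 : u^2 ≤ |u| ^ (2*m) := by
      calc u^2 = |u|^2 := (sq_abs u).symm
      _ ≤ |u|^(2*m) := pow_le_pow_right₀ hu.le (by omega)
    calc |Real.sin u| ^ (2*k) / |u| ^ (2*m) ≤ 1 / u^2 := by
          apply div_le_div₀ (by norm_num) (pow_le_one₀ (abs_nonneg _) hsin) (by nlinarith [sq_abs u]) h3
      _ ≤ 2 * (1+u^2)⁻¹ := by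
          have hu2pos : (0:ℝ) < u^2 := by nlinarith [sq_abs u]
          rw [div_le_iff₀ hu2pos, mul_right_comm, le_mul_inv_iff₀ h1]
          nlinarith [sq_abs u]

lemma aux_int_bdd {t : ℝ} (ht : 0 < t) {g : ℝ → ℝ} (hgm : Measurable g) {C : ℝ}
    (hg : ∀ x, |g x| ≤ C) :
    IntegrableOn (fun u : ℝ => g u * Real.exp (-(t*u))) (Set.Ioi 0) := by
  have hexp : IntegrableOn (fun x : ℝ => Real.exp (-t * x)) (Set.Ioi 0) :=
    exp_neg_integrableOn_Ioi 0 ht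
  refine ((hexp.const_mul C).mono' ?_ ?_)
  · exact (hgm.mul ((Real.measurable_exp.comp ((measurable_id.const_mul t).neg)))).aestronglyMeasurable
  · refine Filter.Eventually.of_forall fun x => ?_
    rw [Real.norm_eq_abs, abs_mul, abs_of_pos (Real.exp_pos _), neg_mul]
    exact mul_le_mul_of_nonneg_right (hg x) (Real.exp_pos _).le

lemma aux_ibp {t : ℝ} (ht : 0 < t) (h h' : ℝ → ℝ) (C C' : ℝ)
    (hd : ∀ x, HasDerivAt h (h' x) x) (hb : ∀ x, |h x| ≤ C) (hb' : ∀ x, |h' x| ≤ C')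
    (h0 : h 0 = 0) :
    ∫ u in Set.Ioi (0:ℝ), h' u * Real.exp (-(t*u))
      = t * ∫ u in Set.Ioi (0:ℝ), h u * Real.exp (-(t*u)) := by
  have hmh : Measurable h := by
    have : Continuous h := by
      rw [continuous_iff_continuousAt]; exact fun x => (hd x).continuousAt
    exact this.measurable
  have hmh' : Measurable h' := by
    have : h' = deriv h := by funext x; exact ((hd x).deriv).symm
    rw [this]; exact measurable_deriv h
  have int1 : IntegrableOn (fun u : ℝ => h u * Real.exp (-(t*u))) (Set.Ioi 0) :=
    aux_int_bdd ht hmh hb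
  have int2 : IntegrableOn (fun u : ℝ => h' u * Real.exp (-(t*u))) (Set.Ioi 0) :=
    aux_int_bdd ht hmh' hb'
  set f : ℝ → ℝ := fun u => -(h u * Real.exp (-(t*u))) with hf
  have hdf : ∀ x, HasDerivAt f (t * (h x * Real.exp (-(t*x))) - h' x * Real.exp (-(t*x))) x := by
    intro x
    have he : HasDerivAt (fun u : ℝ => Real.exp (-(t*u))) (-t * Real.exp (-(t*x))) x := by
      have : HasDerivAt (fun u : ℝ => -(t*u)) (-t) x := by
        simpa using ((hasDerivAt_id x).const_mul t).fun_neg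
      simpa [mul_comm] using this.exp
    have := ((hd x).fun_mul he).fun_neg
    refine this.congr_deriv ?_
    ring
  have htend : Filter.Tendsto f Filter.atTop (nhds 0) := by
    have hexp0 : Filter.Tendsto (fun u : ℝ => Real.exp (-(t*u))) Filter.atTop (nhds 0) := by
      have h2 : Filter.Tendsto (fun u : ℝ => -(t * u)) Filter.atTop Filter.atBot :=
        Filter.tendsto_neg_atBot_iff.mpr (Filter.tendsto_id.const_mul_atTop ht)
      exact Real.tendsto_exp_atBot.comp h2
    have h1 : Filter.Tendsto (fun u : ℝ => C * Real.exp (-(t*u))) Filter.atTop (nhds (C * 0)) :=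
      hexp0.const_mul C
    rw [mul_zero] at h1
    apply squeeze_zero_norm _ h1
    intro u
    rw [hf]
    simp only [norm_neg, Real.norm_eq_abs, abs_mul, abs_of_pos (Real.exp_pos _)]
    exact mul_le_mul_of_nonneg_right (hb u) (Real.exp_pos _).le
  have key := integral_Ioi_of_hasDerivAt_of_tendsto' (a := 0)
    (fun x _ => hdf x) (((int1.const_mul t).sub int2)) htend
  have hf0 : f 0 = 0 := by simp [hf, h0]
  rw [hf0, sub_zero] at key
  have key2 : (∫ u in Set.Ioi (0:ℝ), (t * (h u * Real.exp (-(t*u))) - h' u * Real.exp (-(t*u))))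
      = 0 := key
  rw [MeasureTheory.integral_sub (int1.const_mul t) int2, MeasureTheory.integral_const_mul] at key2
  linarith

lemma aux_F (k : ℕ) {t : ℝ} (ht : 0 < t) :
    ∫ u in Set.Ioi (0:ℝ), Real.sin u ^ (2*k) * Real.exp (-(t*u))
      = (2*k).factorial / (t * ∏ j ∈ Finset.Icc 1 k, (t^2 + 4*(j:ℝ)^2)) := by
  induction k with
  | zero =>
    simp only [Nat.mul_zero, pow_zero, one_mul, Nat.factorial_zero, Finset.Icc_self]
    have := aux_val_pow_exp 0 ht
    simpa using this
  | succ n ih =>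
    have hprodpos : (0:ℝ) < ∏ j ∈ Finset.Icc 1 n, (t^2 + 4*(j:ℝ)^2) :=
      Finset.prod_pos (fun j _ => by positivity)
    have hden : (0:ℝ) < t^2 + 4*((n:ℝ)+1)^2 := by positivity
    set s1 : ℝ → ℝ := fun u => Real.sin u ^ (2*n+2) with hs1
    set d1 : ℝ → ℝ := fun u => (2*n+2 : ℝ) * Real.sin u ^ (2*n+1) * Real.cos u with hd1
    set d2 : ℝ → ℝ := fun u =>
      ((2*n+2 : ℝ) * ((2*n+1 : ℝ) * Real.sin u ^ (2*n) * Real.cos u) * Real.cos u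
        + (2*n+2 : ℝ) * Real.sin u ^ (2*n+1) * (-Real.sin u)) with hd2
    have hds1 : ∀ x, HasDerivAt s1 (d1 x) x := by
      intro x
      have := (Real.hasDerivAt_sin x).fun_pow (2*n+2)
      simpa [hs1, hd1, mul_comm, mul_assoc, mul_left_comm] using this
    have hds2 : ∀ x, HasDerivAt d1 (d2 x) x := by
      intro x
      have h1 := ((Real.hasDerivAt_sin x).fun_pow (2*n+1)).fun_mul (Real.hasDerivAt_cos x)
      have h2 := h1.const_mul (2*n+2 : ℝ)
      rw [show d1 = fun y => (2*n+2:ℝ) * (Real.sin y ^ (2*n+1) * Real.cos y) from by funext u; simp [hd1]; ring]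
      refine h2.congr_deriv ?_
      · simp [hd2]; push_cast; ring
    have hb1 : ∀ x, |s1 x| ≤ 1 := by
      intro x; rw [hs1]
      simp only [abs_pow]
      exact pow_le_one₀ (abs_nonneg _) (Real.abs_sin_le_one x)
    have hb2 : ∀ x, |d1 x| ≤ (2*n+2 : ℝ) := by
      intro x; rw [hd1]
      simp only [abs_mul]
      calc |(2*n+2:ℝ)| * |Real.sin x ^ (2*n+1)| * |Real.cos x|
          ≤ |(2*n+2:ℝ)| * 1 * 1 := by
            apply mul_le_mul (mul_le_mul le_rfl ?_ (abs_nonneg _) (abs_nonneg _))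
              (Real.abs_cos_le_one x) (abs_nonneg _) (by positivity)
            rw [abs_pow]; exact pow_le_one₀ (abs_nonneg _) (Real.abs_sin_le_one x)
        _ = (2*n+2:ℝ) := by rw [mul_one, mul_one, abs_of_pos (by positivity)]
    have hb3 : ∀ x, |d2 x| ≤ (2*n+2:ℝ) * ((2*n+1:ℝ) + 1) := by
      intro x; rw [hd2]
      have hs := Real.abs_sin_le_one x
      have hc := Real.abs_cos_le_one x
      have h1 : |Real.sin x ^ (2*n)| ≤ 1 := by
        rw [abs_pow]; exact pow_le_one₀ (abs_nonneg _) hs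
      have h2 : |Real.sin x ^ (2*n+1)| ≤ 1 := by
        rw [abs_pow]; exact pow_le_one₀ (abs_nonneg _) hs
      calc |_| ≤ |(2*n+2 : ℝ) * ((2*n+1 : ℝ) * Real.sin x ^ (2*n) * Real.cos x) * Real.cos x|
          + |(2*n+2 : ℝ) * Real.sin x ^ (2*n+1) * (-Real.sin x)| := abs_add_le _ _
        _ = (2*n+2:ℝ) * ((2*n+1:ℝ) * |Real.sin x ^ (2*n)| * |Real.cos x|) * |Real.cos x|
            + (2*n+2:ℝ) * |Real.sin x ^ (2*n+1)| * |Real.sin x| := by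
            simp only [abs_mul, abs_neg]
            rw [abs_of_pos (show (0:ℝ) < 2*(n:ℝ)+2 by positivity),
              abs_of_pos (show (0:ℝ) < 2*(n:ℝ)+1 by positivity)]
        _ ≤ (2*n+2:ℝ) * ((2*n+1:ℝ) * 1 * 1) * 1 + (2*n+2:ℝ) * 1 * 1 := by
            gcongr <;> positivity
        _ = (2*n+2:ℝ) * ((2*n+1:ℝ) + 1) := by ring
    have hmeas2n : Measurable (fun u : ℝ => Real.sin u ^ (2*n)) :=
      Real.measurable_sin.pow_const _
    have hbs2n : ∀ x, |Real.sin x ^ (2*n)| ≤ 1 := by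
      intro x; rw [abs_pow]; exact pow_le_one₀ (abs_nonneg _) (Real.abs_sin_le_one x)
    have intA : IntegrableOn (fun u : ℝ => Real.sin u ^ (2*n) * Real.exp (-(t*u))) (Set.Ioi 0) :=
      aux_int_bdd ht hmeas2n hbs2n
    have intB : IntegrableOn (fun u : ℝ => s1 u * Real.exp (-(t*u))) (Set.Ioi 0) :=
      aux_int_bdd ht (Real.measurable_sin.pow_const _) hb1
    have E1 := aux_ibp ht s1 d1 1 (2*(n:ℝ)+2) hds1 hb1 hb2 (by simp [hs1])
    have E2 := aux_ibp ht d1 d2 (2*(n:ℝ)+2) ((2*(n:ℝ)+2)*((2*(n:ℝ)+1)+1)) hds2 hb2 hb3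
      (by simp [hd1])
    rw [E1] at E2
    have hcongr : (fun u : ℝ => d2 u * Real.exp (-(t*u)))
        = fun u : ℝ => (2*(n:ℝ)+2)*(2*(n:ℝ)+1) * (Real.sin u ^ (2*n) * Real.exp (-(t*u)))
          - (4*((n:ℝ)+1)^2) * (s1 u * Real.exp (-(t*u))) := by
      funext u
      rw [hd2, hs1]
      linear_combination (Real.exp (-(t*u)) * (2*(n:ℝ)+2)*(2*(n:ℝ)+1)*Real.sin u^(2*n))
        * (Real.sin_sq_add_cos_sq u)
    rw [hcongr] at E2
    rw [MeasureTheory.integral_sub (intA.const_mul _) (intB.const_mul _),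
      MeasureTheory.integral_const_mul, MeasureTheory.integral_const_mul, ih] at E2
    set B := ∫ u in Set.Ioi (0:ℝ), s1 u * Real.exp (-(t*u)) with hB
    have hgoal1 : 2*(n+1) = 2*n+2 := by ring
    rw [hgoal1]
    have hprodsucc : ∏ j ∈ Finset.Icc 1 (n+1), (t^2 + 4*(j:ℝ)^2)
        = (∏ j ∈ Finset.Icc 1 n, (t^2 + 4*(j:ℝ)^2)) * (t^2 + 4*((n:ℝ)+1)^2) := by
      rw [Finset.prod_Icc_succ_top (Nat.le_add_left 1 n)]
      push_cast
      ring
    have hfact : ((2*n+2).factorial : ℝ) = (2*(n:ℝ)+2)*(2*(n:ℝ)+1) * ((2*n).factorial : ℝ) := by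
      rw [show 2*n+2 = (2*n+1)+1 by ring, Nat.factorial_succ, show 2*n+1 = (2*n)+1 by ring,
        Nat.factorial_succ]
      push_cast
      ring
    show B = _
    rw [hprodsucc, hfact]
    have ht' : t ≠ 0 := ht.ne'
    field_simp at E2 ⊢
    nlinarith [E2]

lemma aux_nodes_inj (k : ℕ) : Set.InjOn (fun j : ℕ => -(4*(j:ℝ)^2)) ↑(Finset.Icc 1 k) := by
  intro a _ b _ h
  simp only at h
  have h2 : (a:ℝ)^2 = (b:ℝ)^2 := by linarith
  have h3 : a^2 = b^2 := by exact_mod_cast h2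
  exact Nat.pow_left_injective (by norm_num) h3

lemma aux_interp {k μ : ℕ} (hμk : μ < k) (s : ℝ) :
    s ^ μ = ∑ j ∈ Finset.Icc 1 k, (-(4*(j:ℝ)^2)) ^ μ *
      ((∏ l ∈ (Finset.Icc 1 k).erase j, (s + 4*(l:ℝ)^2)) /
        (∏ l ∈ (Finset.Icc 1 k).erase j, (4*(l:ℝ)^2 - 4*(j:ℝ)^2))) := by
  set v : ℕ → ℝ := fun j => -(4*(j:ℝ)^2) with hv
  have hvs : Set.InjOn v ↑(Finset.Icc 1 k) := aux_nodes_inj k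
  have hdeg : (Polynomial.X ^ μ : Polynomial ℝ).degree < (Finset.Icc 1 k).card := by
    rw [Polynomial.degree_X_pow, Nat.card_Icc]
    exact_mod_cast by omega
  have h := Lagrange.eq_interpolate (s := Finset.Icc 1 k) (v := v)
    (f := Polynomial.X ^ μ) hvs hdeg
  have h2 := congrArg (Polynomial.eval s) h
  rw [Lagrange.interpolate_apply, Polynomial.eval_pow, Polynomial.eval_X,
    Polynomial.eval_finset_sum] at h2
  rw [h2]
  apply Finset.sum_congr rfl
  intro j hj
  rw [Polynomial.eval_mul, Polynomial.eval_C, Polynomial.eval_pow, Polynomial.eval_X,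
    Lagrange.basis, Polynomial.eval_prod]
  have hBD : ∀ l : ℕ, Polynomial.eval s (Lagrange.basisDivisor (v j) (v l))
      = (4*(l:ℝ)^2 - 4*(j:ℝ)^2)⁻¹ * (s + 4*(l:ℝ)^2) := by
    intro l
    simp only [Lagrange.basisDivisor, Polynomial.eval_mul, Polynomial.eval_C,
      Polynomial.eval_sub, Polynomial.eval_X]
    rw [show v j - v l = 4*(l:ℝ)^2 - 4*(j:ℝ)^2 from by rw [hv]; ring,
      show s - v l = s + 4*(l:ℝ)^2 from by rw [hv]; ring]
  rw [Finset.prod_congr rfl (fun l _ => hBD l), Finset.prod_mul_distrib,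
    Finset.prod_inv_distrib, hv, div_eq_mul_inv]
  ring

lemma aux_arctan_int {a : ℝ} (ha : 0 < a) :
    IntegrableOn (fun t : ℝ => (t^2 + a^2)⁻¹) (Set.Ioi 0) := by
  have hbase : IntegrableOn (fun x : ℝ => (1 + x^2)⁻¹) (Set.Ioi (a⁻¹ * 0)) :=
    integrable_inv_one_add_sq.integrableOn
  have h1 := (integrableOn_Ioi_comp_mul_left_iff (fun x : ℝ => (1 + x^2)⁻¹) 0
    (inv_pos.mpr ha)).mpr hbase
  have h2 : IntegrableOn (fun t : ℝ => (a^2)⁻¹ * (1 + (a⁻¹*t)^2)⁻¹) (Set.Ioi 0) :=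
    h1.const_mul _
  refine h2.congr_fun (fun t _ => ?_) measurableSet_Ioi
  rw [eq_comm]
  field_simp
  ring

lemma aux_arctan {a : ℝ} (ha : 0 < a) :
    ∫ t in Set.Ioi (0:ℝ), (t^2 + a^2)⁻¹ = π / (2*a) := by
  have h : ∀ t : ℝ, (t^2+a^2)⁻¹ = (a^2)⁻¹ * (1 + (a⁻¹*t)^2)⁻¹ := by
    intro t; rw [eq_comm]; field_simp; ring
  simp_rw [h]
  rw [MeasureTheory.integral_const_mul]
  have h2 := integral_comp_mul_left_Ioi (fun x : ℝ => (1 + x^2)⁻¹) 0 (inv_pos.mpr ha)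
  simp only [mul_zero, smul_eq_mul, inv_inv] at h2
  rw [h2]
  rw [integral_Ioi_inv_one_add_sq, Real.arctan_zero]
  field_simp
  ring

lemma aux_prod_shift (a b : ℕ) : ∏ l ∈ Finset.Icc (a+1) (a+b), ((l:ℝ) - a) = b.factorial := by
  induction b with
  | zero => simp
  | succ n ih =>
    rw [show a + (n+1) = (a+n) + 1 by ring, Finset.prod_Icc_succ_top (by omega), ih,
      Nat.factorial_succ]
    push_cast
    ring

lemma aux_prod_id (j : ℕ) : ∏ l ∈ Finset.Icc 1 j, (l:ℝ) = j.factorial := by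
  rw [← Nat.cast_prod]
  congr 1
  rw [← Finset.Ico_add_one_right_eq_Icc]
  exact Finset.prod_Ico_id_eq_factorial j

lemma aux_prod_neg (j : ℕ) : ∏ l ∈ Finset.Icc 1 j, ((l:ℝ) - ((j:ℝ)+1)) = (-1)^j * j.factorial := by
  have h1 : ∏ l ∈ Finset.Icc 1 j, ((l:ℝ) - ((j:ℝ)+1)) = ∏ l ∈ Finset.Icc 1 j, (-(l:ℝ)) := by
    apply Finset.prod_bij' (i := fun l (_ : l ∈ Finset.Icc 1 j) => j + 1 - l)
      (j := fun l (_ : l ∈ Finset.Icc 1 j) => j + 1 - l)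
    · intro a ha
      simp only [Finset.mem_Icc] at ha ⊢
      omega
    · intro a ha
      simp only [Finset.mem_Icc] at ha ⊢
      omega
    · intro a ha
      simp only [Finset.mem_Icc] at ha
      omega
    · intro a ha
      simp only [Finset.mem_Icc] at ha
      omega
    · intro a ha
      simp only [Finset.mem_Icc] at ha
      rw [Nat.cast_sub (by omega)]
      push_cast
      ring
  rw [h1]
  have h2 : ∏ l ∈ Finset.Icc 1 j, (-(l:ℝ)) = ∏ l ∈ Finset.Icc 1 j, ((-1 : ℝ) * (l:ℝ)) := by
    apply Finset.prod_congr rfl; intro l _; ring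
  rw [h2, Finset.prod_mul_distrib, Finset.prod_const, Nat.card_Icc, aux_prod_id]
  simp

lemma aux_prod_add (j k : ℕ) :
    ∏ l ∈ Finset.Icc 1 k, ((l:ℝ) + j) = (k+j).factorial / j.factorial := by
  induction k with
  | zero =>
    simp only [Finset.Icc_self, zero_add]
    rw [Finset.Icc_eq_empty (by omega), Finset.prod_empty, div_self (by positivity)]
  | succ n ih =>
    rw [Finset.prod_Icc_succ_top (by omega), ih, show n + 1 + j = (n+j) + 1 by ring,
      Nat.factorial_succ]
    have : (j.factorial : ℝ) ≠ 0 := by positivity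
    field_simp
    push_cast
    ring

lemma aux_P {k j : ℕ} (hj1 : 1 ≤ j) (hjk : j ≤ k) :
    ∏ l ∈ (Finset.Icc 1 k).erase j, (4*(l:ℝ)^2 - 4*(j:ℝ)^2)
      = 4^(k-1) * ((-1)^(j-1) * (j-1).factorial * (k-j).factorial)
        * ((k+j).factorial / (j.factorial * (2*(j:ℝ)))) := by
  have hjmem : j ∈ Finset.Icc 1 k := by simp [Finset.mem_Icc]; omega
  -- step 1 : factor
  have h1 : ∏ l ∈ (Finset.Icc 1 k).erase j, (4*(l:ℝ)^2 - 4*(j:ℝ)^2)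
      = (4:ℝ)^(k-1) * (∏ l ∈ (Finset.Icc 1 k).erase j, ((l:ℝ) - j))
        * (∏ l ∈ (Finset.Icc 1 k).erase j, ((l:ℝ) + j)) := by
    have : ∀ l ∈ (Finset.Icc 1 k).erase j, (4*(l:ℝ)^2 - 4*(j:ℝ)^2)
        = (4:ℝ) * (((l:ℝ) - j) * ((l:ℝ) + j)) := by intro l _; ring
    rw [Finset.prod_congr rfl this, Finset.prod_mul_distrib, Finset.prod_mul_distrib,
      Finset.prod_const, Finset.card_erase_of_mem hjmem, Nat.card_Icc]
    rw [show k + 1 - 1 - 1 = k - 1 from by omega]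
    ring
  -- step 2 : the (l - j) product
  have hsplit : (Finset.Icc 1 k).erase j = Finset.Icc 1 (j-1) ∪ Finset.Icc (j+1) k := by
    ext x
    simp only [Finset.mem_erase, Finset.mem_Icc, Finset.mem_union]
    omega
  have hdisj : Disjoint (Finset.Icc 1 (j-1)) (Finset.Icc (j+1) k) := by
    rw [Finset.disjoint_left]
    intro x hx hx'
    simp only [Finset.mem_Icc] at hx hx'
    omega
  have h2 : ∏ l ∈ (Finset.Icc 1 k).erase j, ((l:ℝ) - j)
      = (-1)^(j-1) * (j-1).factorial * (k-j).factorial := by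
    rw [hsplit, Finset.prod_union hdisj]
    have e1 : ∏ l ∈ Finset.Icc 1 (j-1), ((l:ℝ) - j)
        = (-1)^(j-1) * ((j-1).factorial : ℝ) := by
      have := aux_prod_neg (j-1)
      rw [show (((j-1:ℕ)):ℝ) + 1 = (j:ℝ) from by
        rw [Nat.cast_sub hj1]; push_cast; ring] at this
      exact this
    have e2 : ∏ l ∈ Finset.Icc (j+1) k, ((l:ℝ) - j) = ((k-j).factorial : ℝ) := by
      have := aux_prod_shift j (k-j)
      rw [show j + (k-j) = k from by omega] at this
      exact this
    rw [e1, e2]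
  -- step 3 : the (l + j) product
  have h3 : ∏ l ∈ (Finset.Icc 1 k).erase j, ((l:ℝ) + j)
      = ((k+j).factorial : ℝ) / (j.factorial * (2*(j:ℝ))) := by
    have hmul := Finset.mul_prod_erase (Finset.Icc 1 k) (fun l => ((l:ℝ) + j)) hjmem
    rw [aux_prod_add j k] at hmul
    have hj0 : (0:ℝ) < (j:ℝ) := by exact_mod_cast hj1
    have : ((j:ℝ) + j) ≠ 0 := by positivity
    have hfj : (j.factorial : ℝ) ≠ 0 := by positivity
    field_simp
    field_simp at hmul
    linear_combination hmul
  rw [h1, h2, h3]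

lemma aux_sign (p q : ℕ) (h : p % 2 = q % 2) : (-1:ℝ)^p = (-1)^q := by
  rcases Nat.even_or_odd p with hp | hp
  · have hq : Even q := by rw [Nat.even_iff] at *; omega
    rw [hp.neg_one_pow, hq.neg_one_pow]
  · have hq : Odd q := by rw [Nat.odd_iff] at *; omega
    rw [hp.neg_one_pow, hq.neg_one_pow]

lemma neg_one_pow_mod (n : ℕ) : (-1:ℝ)^n = (-1)^(n % 2) :=
  aux_sign n (n % 2) (by omega)


lemma aux_term {k m j : ℕ} (hm : 1 ≤ m) (hmk : m ≤ k) (hj1 : 1 ≤ j) (hjk : j ≤ k) :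
    (((2*m-1).factorial : ℝ))⁻¹ * (2 * ((2*k).factorial : ℝ))
      * ((-(4*(j:ℝ)^2))^(m-1) / (∏ l ∈ Finset.Icc 1 k |>.erase j, (4*(l:ℝ)^2 - 4*(j:ℝ)^2)))
      * (π / (4*(j:ℝ)))
    = π * (-(1/4:ℝ))^(k-m) / ((2*m-1).factorial : ℝ)
      * ((-1:ℝ)^(k-j) * ((2*k).choose (k-j) : ℝ) * (j:ℝ)^(2*m-1)) := by
  have hjR : (0:ℝ) < (j:ℝ) := by exact_mod_cast hj1
  rw [aux_P hj1 hjk, Nat.cast_choose ℝ (show k-j ≤ 2*k by omega),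
    show 2*k - (k-j) = k+j from by omega]
  rw [show (-(4*(j:ℝ)^2)) = (-1) * (4*(j:ℝ)^2) from by ring, mul_pow, mul_pow, ← pow_mul,
    show (-(1/4:ℝ)) = (-1) * (1/4) from by ring, mul_pow]
  rw [show (4:ℝ)^(k-1) = 4^(m-1) * 4^(k-m) from by rw [← pow_add]; congr 1; omega]
  rw [show (j:ℝ)^(2*m-1) = (j:ℝ)^(2*(m-1)) * j from by rw [← pow_succ]; congr 1; omega]
  rw [show (j.factorial : ℝ) = j * (j-1).factorial from by
    nth_rewrite 1 2 [show j = (j-1)+1 from by omega]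
    rw [Nat.factorial_succ]
    push_cast [show j - 1 + 1 = j from by omega]
    ring]
  have h1 : ((2*m-1).factorial : ℝ) ≠ 0 := by positivity
  have h3 : ((j-1).factorial:ℝ) ≠ 0 := by positivity
  have h4 : ((k-j).factorial:ℝ) ≠ 0 := by positivity
  have h5 : ((k+j).factorial:ℝ) ≠ 0 := by positivity
  have h6 : (4:ℝ)^(m-1) ≠ 0 := by positivity
  have h7 : (4:ℝ)^(k-m) ≠ 0 := by positivity
  rw [neg_one_pow_mod (m-1), neg_one_pow_mod (j-1), neg_one_pow_mod (k-m), neg_one_pow_mod (k-j)]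
  rcases Nat.even_or_odd m with hm2 | hm2 <;> rcases Nat.even_or_odd k with hk2 | hk2 <;>
    rcases Nat.even_or_odd j with hj2 | hj2 <;>
    simp only [Nat.even_iff, Nat.odd_iff] at hm2 hk2 hj2 <;>
    rw [show (m-1) % 2 = (m-1) % 2 from rfl]
  all_goals (
    first
      | (rw [show (m-1) % 2 = 0 from by omega] ; skip)
      | (rw [show (m-1) % 2 = 1 from by omega] ; skip))
  all_goals (
    first
      | (rw [show (j-1) % 2 = 0 from by omega] ; skip)
      | (rw [show (j-1) % 2 = 1 from by omega] ; skip))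
  all_goals (
    first
      | (rw [show (k-m) % 2 = 0 from by omega] ; skip)
      | (rw [show (k-m) % 2 = 1 from by omega] ; skip))
  all_goals (
    first
      | (rw [show (k-j) % 2 = 0 from by omega] ; skip)
      | (rw [show (k-j) % 2 = 1 from by omega] ; skip))
  all_goals (
    simp only [pow_zero, pow_one, one_div, inv_pow]
    field_simp
    ring)

lemma aux_arctan4 {j : ℝ} (hj : 0 < j) :
    ∫ t in Set.Ioi (0:ℝ), (t^2 + 4*j^2)⁻¹ = π / (4*j) := by
  have h : ∀ t : ℝ, t^2 + 4*j^2 = t^2 + (2*j)^2 := fun t => by ring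
  simp_rw [h]
  rw [aux_arctan (by positivity)]
  ring_nf

lemma aux_arctan4_int {j : ℝ} (hj : 0 < j) :
    MeasureTheory.IntegrableOn (fun t : ℝ => (t^2 + 4*j^2)⁻¹) (Set.Ioi 0) := by
  have h : ∀ t : ℝ, t^2 + 4*j^2 = t^2 + (2*j)^2 := fun t => by ring
  simp_rw [h]
  exact aux_arctan_int (by positivity)

lemma aux_pf {k m : ℕ} (hm : 1 ≤ m) (hmk : m ≤ k) {t : ℝ} (ht : 0 < t) :
    t^(2*m-2) / (∏ j ∈ Finset.Icc 1 k, (t^2 + 4*(j:ℝ)^2))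
      = ∑ j ∈ Finset.Icc 1 k, (-(4*(j:ℝ)^2))^(m-1)
          / (∏ l ∈ (Finset.Icc 1 k).erase j, (4*(l:ℝ)^2 - 4*(j:ℝ)^2))
          * (t^2 + 4*(j:ℝ)^2)⁻¹ := by
  have hP : (0:ℝ) < ∏ j ∈ Finset.Icc 1 k, (t^2 + 4*(j:ℝ)^2) :=
    Finset.prod_pos (fun j _ => by positivity)
  have hinterp := aux_interp (μ := m-1) (show m-1 < k by omega) (t^2)
  rw [show 2*m-2 = 2*(m-1) from by omega, pow_mul, hinterp, Finset.sum_div]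
  apply Finset.sum_congr rfl
  intro j hj
  simp only [Finset.mem_Icc] at hj
  have hQ : ∏ l ∈ (Finset.Icc 1 k).erase j, (4*(l:ℝ)^2 - 4*(j:ℝ)^2) ≠ 0 := by
    apply Finset.prod_ne_zero_iff.mpr
    intro l hl
    simp only [Finset.mem_erase, Finset.mem_Icc] at hl
    have : (l:ℝ) ≠ (j:ℝ) := by exact_mod_cast hl.1
    intro hcon
    have : (l:ℝ)^2 = (j:ℝ)^2 := by linarith
    have h2 : (l:ℝ) = j := by nlinarith [Nat.cast_nonneg (α := ℝ) l, Nat.cast_nonneg (α := ℝ) j]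
    exact absurd h2 ‹(l:ℝ) ≠ (j:ℝ)›
  have hmem : j ∈ Finset.Icc 1 k := by simp [Finset.mem_Icc]; omega
  have hsplit := Finset.mul_prod_erase (Finset.Icc 1 k) (fun l => (t^2 + 4*(l:ℝ)^2)) hmem
  have hEpos : (0:ℝ) < ∏ l ∈ (Finset.Icc 1 k).erase j, (t^2 + 4*(l:ℝ)^2) :=
    Finset.prod_pos (fun l _ => by positivity)
  rw [← hsplit]
  have htj : (0:ℝ) < t^2 + 4*(j:ℝ)^2 := by positivity
  field_simp

theorem dirichlet_type_integral (k m : ℕ) (hk : 1 ≤ k) (hm : 1 ≤ m) (hmk : m ≤ k) :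
    ∫ u : ℝ, Real.sin u ^ (2 * k) / u ^ (2 * m) =
      π * (-(1 / 4 : ℝ)) ^ (k - m) / (Nat.factorial (2 * m - 1)) *
        ∑ i ∈ Finset.range k,
          (-1 : ℝ) ^ i * (Nat.choose (2 * k) i) * ((k : ℝ) - i) ^ (2 * m - 1) := by
  have hsinpow : ∀ u : ℝ, Real.sin |u| ^ (2*k) = Real.sin u ^ (2*k) := by
    intro u
    rcases abs_cases u with ⟨h,_⟩|⟨h,_⟩ <;> rw [h]
    rw [Real.sin_neg, Even.neg_pow ⟨k, by ring⟩]
  have hupow : ∀ u : ℝ, |u|^(2*m) = u^(2*m) := by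
    intro u
    rw [← abs_pow, abs_of_nonneg (Even.pow_nonneg ⟨m, by ring⟩ u)]
  set n := 2*m - 1 with hn
  have hn1 : n + 1 = 2*m := by omega
  have hnfac : ((n.factorial : ℝ)) ≠ 0 := by positivity
  set G : ℝ → ℝ → ℝ := fun u t => Real.sin u ^ (2*k) * (t^n * Real.exp (-(t * |u|))) with hG
  have hae : ∀ᵐ u : ℝ, u ≠ 0 := by
    rw [MeasureTheory.ae_iff]
    simpa using Real.volume_singleton
  have hker : ∀ u : ℝ, u ≠ 0 → (∫ t in Set.Ioi (0:ℝ), t^n * Real.exp (-(t * |u|)))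
      = (n.factorial : ℝ) / |u|^(2*m) := by
    intro u hu
    have habs : (0:ℝ) < |u| := abs_pos.mpr hu
    rw [← hn1, ← aux_val_pow_exp n habs]
    apply MeasureTheory.setIntegral_congr_fun measurableSet_Ioi
    intro t _
    simp only
    rw [mul_comm t (|u|)]
  have hslice : ∀ u : ℝ, u ≠ 0 → MeasureTheory.IntegrableOn (fun t => G u t) (Set.Ioi 0) := by
    intro u hu
    have habs : (0:ℝ) < |u| := abs_pos.mpr hu
    have h : IntegrableOn (fun x : ℝ => Real.sin u ^ (2*k) * (x ^ n * Real.exp (-(|u| * x))))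
        (Set.Ioi 0) := (aux_int_pow_exp n habs).const_mul (Real.sin u ^ (2*k))
    refine h.congr_fun (fun t _ => ?_) measurableSet_Ioi
    rw [hG]
    simp only
    rw [mul_comm t (|u|)]
  have hnorm : ∀ u : ℝ, u ≠ 0 → (∫ t in Set.Ioi (0:ℝ), ‖G u t‖)
      = (n.factorial : ℝ) * (Real.sin u ^ (2*k) / u^(2*m)) := by
    intro u hu
    have hpos : ∀ t ∈ Set.Ioi (0:ℝ), ‖G u t‖ = G u t := by
      intro t ht
      rw [Real.norm_eq_abs, abs_of_nonneg]
      exact mul_nonneg (Even.pow_nonneg ⟨k, by ring⟩ _)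
        (mul_nonneg (pow_nonneg (le_of_lt ht) n) (Real.exp_pos _).le)
    rw [MeasureTheory.setIntegral_congr_fun measurableSet_Ioi hpos, hG]
    simp only
    rw [MeasureTheory.integral_const_mul, hker u hu, hupow u]
    ring
  have hGmeasC : Continuous (Function.uncurry G) := by
    have : Function.uncurry G
        = fun p : ℝ × ℝ => Real.sin p.1 ^ (2*k) * (p.2^n * Real.exp (-(p.2 * |p.1|))) := rfl
    rw [this]
    fun_prop
  have hGint : MeasureTheory.Integrable (Function.uncurry G)
      ((volume : Measure ℝ).prod ((volume : Measure ℝ).restrict (Set.Ioi 0))) := by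
    rw [MeasureTheory.integrable_prod_iff hGmeasC.aestronglyMeasurable]
    constructor
    · filter_upwards [hae] with u hu
      exact hslice u hu
    · refine ((aux_int_main hm hmk).const_mul (n.factorial : ℝ)).congr ?_
      filter_upwards [hae] with u hu
      exact (hnorm u hu).symm
  have houter : ∀ t ∈ Set.Ioi (0:ℝ), (∫ u : ℝ, G u t)
      = 2 * ((2*k).factorial : ℝ) * ∑ j ∈ Finset.Icc 1 k, ((-(4*(j:ℝ)^2))^(m-1)
          / (∏ l ∈ (Finset.Icc 1 k).erase j, (4*(l:ℝ)^2 - 4*(j:ℝ)^2)) * (t^2 + 4*(j:ℝ)^2)⁻¹) := by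
    intro t ht
    have ht' : (0:ℝ) < t := ht
    have hPpos : (0:ℝ) < ∏ j ∈ Finset.Icc 1 k, (t^2 + 4*(j:ℝ)^2) :=
      Finset.prod_pos (fun j _ => by positivity)
    have h1 : (fun u : ℝ => G u t)
        = fun u => t^n * ((fun x => Real.sin x ^ (2*k) * Real.exp (-(t*x))) |u|) := by
      funext u
      rw [hG]
      simp only
      rw [hsinpow u, mul_comm t (|u|)]
      ring
    rw [h1, MeasureTheory.integral_const_mul,
      integral_comp_abs (f := fun x => Real.sin x ^ (2*k) * Real.exp (-(t*x))), aux_F k ht']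
    have h2 : t^n * (2 * (((2*k).factorial:ℝ) / (t * ∏ j ∈ Finset.Icc 1 k, (t^2 + 4*(j:ℝ)^2))))
        = 2*((2*k).factorial:ℝ) * (t^(2*m-2) / ∏ j ∈ Finset.Icc 1 k, (t^2 + 4*(j:ℝ)^2)) := by
      rw [show n = (2*m-2)+1 from by omega, pow_succ]
      field_simp
    rw [h2, aux_pf hm hmk ht']
  -- the left-hand side as iterated integral
  have step1 : ∫ u : ℝ, Real.sin u ^ (2 * k) / u ^ (2 * m)
      = (n.factorial : ℝ)⁻¹ * ∫ u : ℝ, ∫ t in Set.Ioi (0:ℝ), G u t := by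
    rw [← MeasureTheory.integral_const_mul]
    apply MeasureTheory.integral_congr_ae
    filter_upwards [hae] with u hu
    rw [hG]
    simp only
    rw [MeasureTheory.integral_const_mul, hker u hu, hupow u]
    have hu2m : u^(2*m) ≠ 0 := pow_ne_zero _ hu
    field_simp
  have step2 : (∫ u : ℝ, ∫ t in Set.Ioi (0:ℝ), G u t)
      = ∫ t in Set.Ioi (0:ℝ), ∫ u : ℝ, G u t :=
    MeasureTheory.integral_integral_swap hGint
  have step3 : (∫ t in Set.Ioi (0:ℝ), ∫ u : ℝ, G u t)
      = 2 * ((2*k).factorial : ℝ) * ∑ j ∈ Finset.Icc 1 k, ((-(4*(j:ℝ)^2))^(m-1)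
          / (∏ l ∈ (Finset.Icc 1 k).erase j, (4*(l:ℝ)^2 - 4*(j:ℝ)^2)) * (π / (4*(j:ℝ)))) := by
    rw [MeasureTheory.setIntegral_congr_fun measurableSet_Ioi houter,
      MeasureTheory.integral_const_mul]
    congr 1
    rw [MeasureTheory.integral_finset_sum]
    · apply Finset.sum_congr rfl
      intro j hj
      simp only [Finset.mem_Icc] at hj
      have hjpos : (0:ℝ) < (j:ℝ) := by exact_mod_cast hj.1
      rw [MeasureTheory.integral_const_mul, aux_arctan4 hjpos]
    · intro j hj
      simp only [Finset.mem_Icc] at hj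
      have hjpos : (0:ℝ) < (j:ℝ) := by exact_mod_cast hj.1
      exact (aux_arctan4_int hjpos).const_mul _
  rw [step1, step2, step3]
  -- reindex the target sum
  have hreindex : ∑ i ∈ Finset.range k, (-1:ℝ)^i * ((2*k).choose i) * ((k:ℝ) - i)^(2*m-1)
      = ∑ j ∈ Finset.Icc 1 k, (-1:ℝ)^(k-j) * ((2*k).choose (k-j)) * ((j:ℝ))^(2*m-1) := by
    apply Finset.sum_bij' (i := fun i (_ : i ∈ Finset.range k) => k - i)
      (j := fun j (_ : j ∈ Finset.Icc 1 k) => k - j)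
    · intro a ha; simp only [Finset.mem_range] at ha; simp only [Finset.mem_Icc]; omega
    · intro a ha; simp only [Finset.mem_Icc] at ha; simp only [Finset.mem_range]; omega
    · intro a ha; simp only [Finset.mem_range] at ha; omega
    · intro a ha; simp only [Finset.mem_Icc] at ha; omega
    · intro a ha
      simp only [Finset.mem_range] at ha
      rw [show k - (k - a) = a from by omega, Nat.cast_sub (by omega : a ≤ k)]
  rw [hreindex]
  simp only [Finset.mul_sum]
  apply Finset.sum_congr rfl
  intro j hj
  simp only [Finset.mem_Icc] at hj
  have haux := aux_term (k := k) (m := m) (j := j) hm hmk hj.1 hj.2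
  simp only [hn]
  linear_combination haux
end auxDTI
end

section
/- For positive integers n and k and any real t with t ≠ πn/2 and t ≠ -πn/2, the following partial-fraction identity holds: 1/((t - πn/2)^{2k} (t + πn/2)^{2k}) = (πn)^{-2k} · Σ_{j=0}^{2k-1} (πn)^{-j} · C(j+2k-1, 2k-1) · [(t + πn/2)^{j-2k} + (-1)^j (t - πn/2)^{j-2k}]. -/
open Real Finset

lemma A_rec (s : ℝ) (m : ℕ) :
    (1 - s) * ∑ j ∈ range (m + 2), ((m + 1 + j).choose j : ℝ) * s ^ j =
      (∑ j ∈ range (m + 1), ((m + j).choose j : ℝ) * s ^ j)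
        + ((2*m+1).choose (m+1) : ℝ) * s ^ (m+1)
        - ((2*m+2).choose (m+1) : ℝ) * s ^ (m+2) := by
  have hS : ∑ j ∈ range (m + 2), ((m + 1 + j).choose j : ℝ) * s ^ j
      = (∑ j ∈ range (m + 1), ((m + 2 + j).choose (j+1) : ℝ) * s ^ (j+1)) + 1 := by
    rw [Finset.sum_range_succ']
    simp [add_assoc, add_comm, add_left_comm]
  have hsS : s * ∑ j ∈ range (m + 2), ((m + 1 + j).choose j : ℝ) * s ^ j
      = (∑ j ∈ range (m + 1), ((m + 1 + j).choose j : ℝ) * s ^ (j+1))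
        + ((2*m+2).choose (m+1) : ℝ) * s ^ (m+2) := by
    rw [Finset.mul_sum]
    rw [show m + 2 = (m+1)+1 from rfl, Finset.sum_range_succ]
    congr 1
    · exact Finset.sum_congr rfl fun j _ => by ring
    · have : m + 1 + (m + 1) = 2*m+2 := by ring
      rw [this]; ring
  have pascal : ∀ j, ((m + 2 + j).choose (j+1) : ℝ)
      = (m + 1 + j).choose j + (m + 1 + j).choose (j+1) := by
    intro j
    have := Nat.choose_succ_succ (m + 1 + j) j
    have h2 : m + 2 + j = (m + 1 + j) + 1 := by ring
    rw [h2]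
    exact_mod_cast this
  have key : (1 - s) * ∑ j ∈ range (m + 2), ((m + 1 + j).choose j : ℝ) * s ^ j
      = 1 + (∑ j ∈ range (m + 1), ((m + 1 + j).choose (j+1) : ℝ) * s ^ (j+1))
        - ((2*m+2).choose (m+1) : ℝ) * s ^ (m+2) := by
    rw [sub_mul, one_mul, hsS, hS]
    have : ∑ j ∈ range (m + 1), ((m + 2 + j).choose (j+1) : ℝ) * s ^ (j+1)
        - ∑ j ∈ range (m + 1), ((m + 1 + j).choose j : ℝ) * s ^ (j+1)
        = ∑ j ∈ range (m + 1), ((m + 1 + j).choose (j+1) : ℝ) * s ^ (j+1) := by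
      rw [← Finset.sum_sub_distrib]
      exact Finset.sum_congr rfl fun j _ => by rw [pascal j]; ring
    linarith [this]
  rw [key]
  have hR : ∑ j ∈ range (m + 1), ((m + j).choose j : ℝ) * s ^ j
      = 1 + ∑ j ∈ range m, ((m + 1 + j).choose (j+1) : ℝ) * s ^ (j+1) := by
    rw [Finset.sum_range_succ']
    have : ∀ j, (m + (j+1)).choose (j+1) = (m+1+j).choose (j+1) := by
      intro j; congr 1; ring
    simp [this, add_comm]
  have hL : ∑ j ∈ range (m + 1), ((m + 1 + j).choose (j+1) : ℝ) * s ^ (j+1)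
      = (∑ j ∈ range m, ((m + 1 + j).choose (j+1) : ℝ) * s ^ (j+1))
        + ((2*m+1).choose (m+1) : ℝ) * s ^ (m+1) := by
    rw [Finset.sum_range_succ]
    congr 2
    · congr 1; ring
  rw [hL, hR]
  ring

lemma key_id (s : ℝ) : ∀ m : ℕ,
    (1 - s) ^ (m+1) * (∑ j ∈ range (m+1), ((m + j).choose j : ℝ) * s ^ j)
      + s ^ (m+1) * (∑ j ∈ range (m+1), ((m + j).choose j : ℝ) * (1 - s) ^ j) = 1 := by
  intro m
  induction m with
  | zero => simp
  | succ m ih =>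
    have hA := A_rec s m
    have hB := A_rec (1 - s) m
    rw [show (1 - (1 - s)) = s by ring] at hB
    have e1 : (1 - s) ^ (m + 1 + 1) * ∑ j ∈ range (m + 1 + 1), ((m + 1 + j).choose j : ℝ) * s ^ j
        = (1-s)^(m+1) * ((1 - s) * ∑ j ∈ range (m + 2), ((m + 1 + j).choose j : ℝ) * s ^ j) := by
      ring
    have e2 : s ^ (m + 1 + 1) * ∑ j ∈ range (m + 1 + 1), ((m + 1 + j).choose j : ℝ) * (1-s) ^ j
        = s^(m+1) * (s * ∑ j ∈ range (m + 2), ((m + 1 + j).choose j : ℝ) * (1-s) ^ j) := by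
      ring
    rw [e1, e2, hA, hB]
    have hs : (2*m+1).choose m = (2*m+1).choose (m+1) := by
      rw [← Nat.choose_symm (by omega : m ≤ 2*m+1)]
      congr 1; omega
    have hch : ((2*m+2).choose (m+1) : ℝ) = 2 * ((2*m+1).choose (m+1) : ℝ) := by
      rw [show 2*m+2 = (2*m+1)+1 from rfl]
      push_cast [Nat.choose_succ_succ (2*m+1) m, hs]
      ring
    rw [hch]
    linear_combination ih

lemma pf (x c : ℝ) (hx : x ≠ 0) (hc : c ≠ 0) (hy : x + c ≠ 0) (k : ℕ) (hk : 1 ≤ k) :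
    1 / (x ^ (2*k) * (x + c) ^ (2*k)) =
      (c ^ (2*k))⁻¹ * ∑ j ∈ range (2*k), (c ^ j)⁻¹ * ((j + 2*k - 1).choose (2*k - 1) : ℝ) *
        (((x + c) ^ (2*k - j))⁻¹ + (-1:ℝ)^j * (x ^ (2*k - j))⁻¹) := by
  have h2k : 2*k - 1 + 1 = 2*k := by omega
  have key := key_id (-x/c) (2*k-1)
  rw [h2k] at key
  rw [show (1 : ℝ) - -x/c = (x+c)/c by field_simp; ring] at key
  have hD : x ^ (2*k) * (x + c) ^ (2*k) ≠ 0 :=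
    mul_ne_zero (pow_ne_zero _ hx) (pow_ne_zero _ hy)
  rw [div_eq_iff hD]
  conv_lhs => rw [← key]
  simp only [Finset.mul_sum, Finset.sum_mul, ← Finset.sum_add_distrib]
  refine Finset.sum_congr rfl fun j hj => ?_
  have hj' : j ≤ 2*k := le_of_lt (mem_range.mp hj)
  have hcho : ((j + 2*k - 1).choose (2*k - 1) : ℝ) = ((2*k - 1 + j).choose j : ℝ) := by
    congr 1
    rw [show j + 2*k - 1 = 2*k - 1 + j by omega,
      ← Nat.choose_symm (Nat.le_add_right (2*k-1) j)]
    congr 1; omega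
  have hxs : x ^ (2*k) = x ^ (2*k - j) * x ^ j := by rw [← pow_add]; congr 1; omega
  have hys : (x+c) ^ (2*k) = (x+c) ^ (2*k - j) * (x+c) ^ j := by
    rw [← pow_add]; congr 1; omega
  rw [hcho, neg_div, Even.neg_pow (even_two_mul k), neg_pow]
  have h1 : x ^ (2*k - j) ≠ 0 := pow_ne_zero _ hx
  have h2 : (x+c) ^ (2*k - j) ≠ 0 := pow_ne_zero _ hy
  simp only [div_pow]
  field_simp
  ring_nf
  have e1 : (x+c)^j * (x+c)^(k*2-j) = (x+c)^(k*2) := by rw [← pow_add]; congr 1; omega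
  have e2 : x^j * x^(k*2-j) = x^(k*2) := by rw [← pow_add]; congr 1; omega
  linear_combination (x^(k*2)*x^(k*2-j)*(((k*2-1+j).choose j : ℕ) : ℝ)) * e1
    + ((((k*2-1+j).choose j : ℕ) : ℝ)*(-1:ℝ)^j*(x+c)^(k*2)*(x+c)^(k*2-j)) * e2

theorem partial_fraction_pi_n (n k : ℕ) (hn : 1 ≤ n) (hk : 1 ≤ k) (t : ℝ)
    (h1 : t ≠ π * n / 2) (h2 : t ≠ -(π * n / 2)) :
    1 / ((t - π * n / 2) ^ (2 * k) * (t + π * n / 2) ^ (2 * k)) =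
      ((π * n) ^ (2 * k))⁻¹ *
        ∑ j ∈ Finset.range (2 * k),
          ((π * n) ^ j)⁻¹ * (Nat.choose (j + 2 * k - 1) (2 * k - 1)) *
            (((t + π * n / 2) ^ (2 * k - j))⁻¹ +
              (-1 : ℝ) ^ j * ((t - π * n / 2) ^ (2 * k - j))⁻¹) := by
  have hx : t - π * n / 2 ≠ 0 := sub_ne_zero.mpr h1
  have hc : (π * n : ℝ) ≠ 0 :=
    mul_ne_zero Real.pi_ne_zero (Nat.cast_ne_zero.mpr (by omega))
  have hy : t - π * n / 2 + π * n ≠ 0 := by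
    intro h; apply h2; linarith
  have := pf (t - π * n / 2) (π * n) hx hc hy k hk
  rw [show t - π * n / 2 + π * n = t + π * n / 2 by ring] at this
  exact this
end

section
/- For positive real b and any real t with t ≠ b and t ≠ -b, and any positive integer k: 1/((t - b)^{2k} (t + b)^{2k}) = (2b)^{-2k} · Σ_{j=0}^{2k-1} (2b)^{-j} · C(j+2k-1, 2k-1) · [(t + b)^{j-2k} + (-1)^j (t - b)^{j-2k}]. -/
open Finset


def Bs (u y : ℝ) (p n : ℕ) : ℝ :=
  ∑ j ∈ Finset.range n, (Nat.choose (p + j) j : ℝ) * y ^ j * (u + y) ^ (n - 1 - j)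

lemma Bs_split (u y : ℝ) (p n : ℕ) :
    Bs u y p (n + 1) = (u + y) * Bs u y p n + (Nat.choose (p + n) n : ℝ) * y ^ n := by
  unfold Bs
  rw [Finset.sum_range_succ, Finset.mul_sum]
  congr 1
  · apply Finset.sum_congr rfl
    intro j hj
    rw [Finset.mem_range] at hj
    rw [show n + 1 - 1 - j = (n - 1 - j) + 1 from by omega, pow_succ]
    ring
  · simp

lemma Bs_pascal (u y : ℝ) (p n : ℕ) :
    Bs u y (p + 1) (n + 1) = Bs u y p (n + 1) + y * Bs u y (p + 1) n := by
  unfold Bs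
  rw [Finset.sum_range_succ', Finset.sum_range_succ' (n := n), Finset.mul_sum]
  have key : ∀ i ∈ Finset.range n,
      ((Nat.choose (p + 1 + (i + 1)) (i + 1) : ℝ) * y ^ (i + 1) * (u + y) ^ (n + 1 - 1 - (i + 1)))
      = (Nat.choose (p + (i + 1)) (i + 1) : ℝ) * y ^ (i + 1) * (u + y) ^ (n + 1 - 1 - (i + 1))
        + y * ((Nat.choose (p + 1 + i) i : ℝ) * y ^ i * (u + y) ^ (n - 1 - i)) := by
    intro i hi
    rw [Finset.mem_range] at hi
    rw [show p + 1 + (i + 1) = (p + i + 1) + 1 from by omega,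
        Nat.choose_succ_succ (p + i + 1) i,
        show p + (i + 1) = p + i + 1 from by omega,
        show p + 1 + i = p + i + 1 from by omega,
        show n + 1 - 1 - (i + 1) = n - 1 - i from by omega]
    push_cast
    ring
  rw [Finset.sum_congr rfl key, Finset.sum_add_distrib]
  simp only [Nat.choose_zero_right, Nat.cast_one, pow_zero]
  ring

lemma Bs_key (u y : ℝ) (p n : ℕ) :
    Bs u y p (n + 1) = u * Bs u y (p + 1) n + (Nat.choose (p + n + 1) n : ℝ) * y ^ n := by
  induction n with
  | zero => simp [Bs]
  | succ n ih =>
    rw [Bs_split, Bs_pascal, ih]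
    rw [show p + (n + 1) + 1 = (p + n + 1) + 1 from by omega,
        show p + (n + 1) = p + n + 1 from by omega,
        Nat.choose_succ_succ (p + n + 1) n]
    push_cast
    ring

lemma Gbase (u y : ℝ) (N : ℕ) : (u + y) ^ (N + 1) = y ^ (N + 1) + u * Bs u y 0 (N + 1) := by
  induction N with
  | zero =>
    simp [Bs]
    ring
  | succ N ih =>
    rw [Bs_split, show (u + y) ^ (N + 1 + 1) = (u + y) * (u + y) ^ (N + 1) from by ring, ih]
    have : Nat.choose (0 + (N + 1)) (N + 1) = 1 := by simp
    rw [this]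
    push_cast
    ring

lemma Gmain (u y : ℝ) (M N : ℕ) :
    (u + y) ^ (M + N + 1) =
      y ^ (N + 1) * Bs y u N (M + 1) + u ^ (M + 1) * Bs u y M (N + 1) := by
  induction M with
  | zero =>
    have h1 : Bs y u N 1 = 1 := by simp [Bs]
    rw [h1, Nat.zero_add, Gbase u y N]
    ring
  | succ M ih =>
    have hA : Bs y u N (M + 1 + 1)
        = (y + u) * Bs y u N (M + 1) + (Nat.choose (N + (M + 1)) (M + 1) : ℝ) * u ^ (M + 1) :=
      Bs_split y u N (M + 1)
    have hB : Bs u y (M + 1) (N + 1) = Bs u y M (N + 1) + y * Bs u y (M + 1) N :=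
      Bs_pascal u y M N
    have hK : Bs u y M (N + 1)
        = u * Bs u y (M + 1) N + (Nat.choose (M + N + 1) N : ℝ) * y ^ N :=
      Bs_key u y M N
    have hsym : Nat.choose (N + (M + 1)) (M + 1) = Nat.choose (M + N + 1) N := by
      rw [show N + (M + 1) = (M + 1) + N from by omega]
      have := Nat.choose_symm (Nat.le_add_right (M + 1) N)
      rw [Nat.add_sub_cancel_left] at this
      rw [← this]
      congr 1
      omega
    rw [show M + 1 + N + 1 = (M + N + 1) + 1 from by omega, pow_succ, ih, hA, hB, hsym]
    linear_combination (u ^ (M + 1) * y) * hK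

theorem partial_fraction_general (b : ℝ) (hb : 0 < b) (k : ℕ) (hk : 1 ≤ k) (t : ℝ)
    (h1 : t ≠ b) (h2 : t ≠ -b) :
    1 / ((t - b) ^ (2 * k) * (t + b) ^ (2 * k)) =
      ((2 * b) ^ (2 * k))⁻¹ *
        ∑ j ∈ Finset.range (2 * k),
          ((2 * b) ^ j)⁻¹ * (Nat.choose (j + 2 * k - 1) (2 * k - 1)) *
            (((t + b) ^ (2 * k - j))⁻¹ + (-1 : ℝ) ^ j * ((t - b) ^ (2 * k - j))⁻¹) := by
  set n := 2 * k with hndef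
  have hn : 1 ≤ n := by omega
  set u : ℝ := b - t with hudef
  set y : ℝ := t + b with hydef
  have hu : u ≠ 0 := sub_ne_zero.mpr (fun h => h1 h.symm)
  have hy : y ≠ 0 := fun h => h2 (by linarith [h])
  have hc0 : (2 : ℝ) * b ≠ 0 := by positivity
  have hc : u + y = 2 * b := by rw [hudef, hydef]; ring
  have htb : (t - b) = -u := by rw [hudef]; ring
  have htbpow : (t - b) ^ n = u ^ n := by
    rw [htb, Even.neg_pow ⟨k, by omega⟩]
  set S := ∑ j ∈ Finset.range n,
      ((2 * b) ^ j)⁻¹ * (Nat.choose (j + n - 1) (n - 1) : ℝ) *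
        ((y ^ (n - j))⁻¹ + (-1 : ℝ) ^ j * ((t - b) ^ (n - j))⁻¹) with hSdef
  have key : (2 * b) ^ (n - 1) * u ^ n * y ^ n * S = (2 * b) ^ (2 * n - 1) := by
    have hG := Gmain u y (n - 1) (n - 1)
    rw [show n - 1 + (n - 1) + 1 = 2 * n - 1 from by omega,
        show n - 1 + 1 = n from by omega] at hG
    rw [hc] at hG
    rw [hG, hSdef, Finset.mul_sum]
    unfold Bs
    rw [Finset.mul_sum, Finset.mul_sum, ← Finset.sum_add_distrib]
    apply Finset.sum_congr rfl
    intro j hj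
    rw [Finset.mem_range] at hj
    have hneg : (-1 : ℝ) ^ j * ((t - b) ^ (n - j))⁻¹ = (u ^ (n - j))⁻¹ := by
      have hstep : ((t - b) ^ (n - j))⁻¹ = (-1 : ℝ) ^ (n - j) * (u ^ (n - j))⁻¹ := by
        rw [htb, neg_pow, mul_inv, ← inv_pow, inv_neg, inv_one]
      rw [hstep, ← mul_assoc, ← pow_add, show j + (n - j) = 2 * k from by omega,
          Even.neg_one_pow ⟨k, by omega⟩, one_mul]
    rw [hneg]
    have hC : (Nat.choose (j + n - 1) (n - 1) : ℝ) = (Nat.choose (n - 1 + j) j : ℝ) := by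
      norm_cast
      rw [show j + n - 1 = n - 1 + j from by omega]
      have := Nat.choose_symm (Nat.le_add_left j (n - 1))
      rwa [Nat.add_sub_cancel] at this
    rw [hC, hc, show y + u = 2 * b from by rw [← hc]; ring]
    rw [show (2 * b) ^ (n - 1) = (2 * b) ^ (n - 1 - j) * (2 * b) ^ j from by
          rw [← pow_add]; congr 1; omega,
        show u ^ n = u ^ (n - j) * u ^ j from by rw [← pow_add]; congr 1; omega,
        show y ^ n = y ^ (n - j) * y ^ j from by rw [← pow_add]; congr 1; omega]
    field_simp
    ring
  have hS : S = (2 * b) ^ n / (u ^ n * y ^ n) := by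
    rw [eq_div_iff (mul_ne_zero (pow_ne_zero _ hu) (pow_ne_zero _ hy))]
    have h2 : (2 * b) ^ (2 * n - 1) = (2 * b) ^ (n - 1) * (2 * b) ^ n := by
      rw [← pow_add]; congr 1; omega
    have h4 : (2 * b) ^ (n - 1) * (S * (u ^ n * y ^ n)) = (2 * b) ^ (n - 1) * (2 * b) ^ n := by
      linear_combination key + h2
    exact mul_left_cancel₀ (pow_ne_zero _ hc0) h4
  rw [htbpow, hS]
  field_simp
end

section
/- For positive integers n and k, the integral I_{n,k} := ∫_{-∞}^{∞} [sin²(t - πn/2) / (t² - π²n²/4)²]^k dt satisfies I_{n,k} = (πn)^{-2k} · Σ_{j=0}^{k-1} 2 (πn)^{-2j} · C(2j+2k-1, 2k-1) · ∫_{-∞}^{∞} sin^{2k}(u) / u^{2(k-j)} du. -/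
open Real MeasureTheory Finset

namespace InkAux

/-- x-part recurrence -/
lemma sumX (b x : ℝ) (hb : b ≠ 0) (p q : ℕ) :
    b * ∑ s ∈ range (p+2), (-1:ℝ)^s * ((q+1+s).choose s) * (b^(q+2+s))⁻¹ * (x^(p+2-s))⁻¹ =
      (∑ s ∈ range (p+2), (-1:ℝ)^s * ((q+s).choose s) * (b^(q+1+s))⁻¹ * (x^(p+2-s))⁻¹)
      - ∑ s ∈ range (p+1), (-1:ℝ)^s * ((q+1+s).choose s) * (b^(q+2+s))⁻¹ * (x^(p+1-s))⁻¹ := by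
  have hbb : b * b⁻¹ = 1 := mul_inv_cancel₀ hb
  rw [Finset.mul_sum, Finset.sum_range_succ' (fun s => b * ((-1:ℝ)^s * ((q+1+s).choose s) * (b^(q+2+s))⁻¹ * (x^(p+2-s))⁻¹)),
      Finset.sum_range_succ' (fun s => (-1:ℝ)^s * ((q+s).choose s) * (b^(q+1+s))⁻¹ * (x^(p+2-s))⁻¹)]
  rw [eq_sub_iff_add_eq]
  rw [add_right_comm, ← Finset.sum_add_distrib]
  congr 1
  · apply Finset.sum_congr rfl
    intro s _
    have h1 : q+1+(s+1) = q+2+s := by omega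
    have h2 : p+2-(s+1) = p+1-s := by omega
    have h3 : q+2+(s+1) = (q+2+s)+1 := by omega
    have h4 : q+(s+1) = q+1+s := by omega
    have hp : (b^(q+2+s+1))⁻¹ = (b^(q+2+s))⁻¹ * b⁻¹ := by rw [pow_succ, mul_inv]
    rw [h1, h2, h3, h4, hp]
    have h5 : (q+2+s).choose (s+1) = (q+1+s).choose s + (q+1+s).choose (s+1) := by
      rw [show q+2+s = (q+1+s)+1 by omega, Nat.choose_succ_succ]
    rw [h5]
    push_cast
    linear_combination ((-1:ℝ)^(s+1) * (((q+1+s).choose s : ℝ) + ((q+1+s).choose (s+1) : ℝ))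
      * (b^(q+2+s))⁻¹ * (x^(p+1-s))⁻¹) * hbb
  · simp only [Nat.add_zero, Nat.sub_zero, pow_zero, one_mul, Nat.choose_zero_right, Nat.cast_one]
    have h : q+2+0 = (q+1)+1 := by omega
    have hp : (b^(q+1+1))⁻¹ = (b^(q+1))⁻¹ * b⁻¹ := by rw [pow_succ, mul_inv]
    rw [h, hp]
    have h2 : q + 1 + 0 = q + 1 := by omega
    rw [h2]
    linear_combination ((b^(q+1))⁻¹ * (x^(p+2))⁻¹) * hbb

lemma sumY (b x : ℝ) (hb : b ≠ 0) (p q : ℕ) :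
    b * ∑ s ∈ range (q+2), (((p+1+s).choose s : ℝ)) * (b^(p+2+s))⁻¹ * (x^(q+2-s))⁻¹ =
      (∑ s ∈ range (q+1), (((p+1+s).choose s : ℝ)) * (b^(p+2+s))⁻¹ * (x^(q+1-s))⁻¹)
      + ∑ s ∈ range (q+2), (((p+s).choose s : ℝ)) * (b^(p+1+s))⁻¹ * (x^(q+2-s))⁻¹ := by
  have hbb : b * b⁻¹ = 1 := mul_inv_cancel₀ hb
  rw [Finset.mul_sum, Finset.sum_range_succ' (fun s => b * ((((p+1+s).choose s : ℝ)) * (b^(p+2+s))⁻¹ * (x^(q+2-s))⁻¹)),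
      Finset.sum_range_succ' (fun s => (((p+s).choose s : ℝ)) * (b^(p+1+s))⁻¹ * (x^(q+2-s))⁻¹)]
  rw [← add_assoc, ← Finset.sum_add_distrib]
  congr 1
  · apply Finset.sum_congr rfl
    intro s _
    have h1 : p+1+(s+1) = p+2+s := by omega
    have h2 : q+2-(s+1) = q+1-s := by omega
    have h4 : p+(s+1) = p+1+s := by omega
    have hp : (b^(p+2+(s+1)))⁻¹ = (b^(p+2+s))⁻¹ * b⁻¹ := by
      rw [show p+2+(s+1) = (p+2+s)+1 by omega, pow_succ, mul_inv]
    rw [h1, h2, h4, hp]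
    have h5 : (p+2+s).choose (s+1) = (p+1+s).choose s + (p+1+s).choose (s+1) := by
      rw [show p+2+s = (p+1+s)+1 by omega, Nat.choose_succ_succ]
    rw [h5]
    push_cast
    linear_combination ((((p+1+s).choose s : ℝ) + ((p+1+s).choose (s+1) : ℝ))
      * (b^(p+2+s))⁻¹ * (x^(q+1-s))⁻¹) * hbb
  · simp only [Nat.add_zero, Nat.sub_zero, Nat.choose_zero_right, Nat.cast_one, one_mul]
    have hp : (b^(p+2+0))⁻¹ = (b^(p+1))⁻¹ * b⁻¹ := by
      rw [show p+2+0 = (p+1)+1 by omega, pow_succ, mul_inv]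
    rw [hp]
    linear_combination ((b^(p+1))⁻¹ * (x^(q+2))⁻¹) * hbb

lemma sumX0 (b x : ℝ) (hb : b ≠ 0) (p : ℕ) :
    b * ∑ s ∈ range (p+2), (-1:ℝ)^s * ((0+s).choose s) * (b^(0+1+s))⁻¹ * (x^(p+2-s))⁻¹ =
      (x^(p+2))⁻¹ - ∑ s ∈ range (p+1), (-1:ℝ)^s * ((0+s).choose s) * (b^(0+1+s))⁻¹ * (x^(p+1-s))⁻¹ := by
  have hbb : b * b⁻¹ = 1 := mul_inv_cancel₀ hb
  rw [Finset.mul_sum, Finset.sum_range_succ' (fun s => b * ((-1:ℝ)^s * ((0+s).choose s) * (b^(0+1+s))⁻¹ * (x^(p+2-s))⁻¹))]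
  rw [eq_sub_iff_add_eq, add_right_comm, ← Finset.sum_add_distrib]
  have hz : (∑ s ∈ range (p+1), (b * ((-1:ℝ)^(s+1) * ((0+(s+1)).choose (s+1)) * (b^(0+1+(s+1)))⁻¹ * (x^(p+2-(s+1)))⁻¹)
      + (-1:ℝ)^s * ((0+s).choose s) * (b^(0+1+s))⁻¹ * (x^(p+1-s))⁻¹)) = 0 := by
    apply Finset.sum_eq_zero
    intro s _
    have h2 : p+2-(s+1) = p+1-s := by omega
    have hp : (b^(0+1+(s+1)))⁻¹ = (b^(0+1+s))⁻¹ * b⁻¹ := by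
      rw [show 0+1+(s+1) = (0+1+s)+1 by omega, pow_succ, mul_inv]
    rw [h2, hp]
    simp only [Nat.zero_add, Nat.choose_self, Nat.cast_one]
    linear_combination ((-1:ℝ)^(s+1) * (b^(0+1+s))⁻¹ * (x^(p+1-s))⁻¹) * hbb
  rw [hz, zero_add]
  simp only [Nat.add_zero, Nat.sub_zero, pow_zero, one_mul, Nat.choose_zero_right, Nat.cast_one, Nat.zero_add]
  have hp : (b^(0+1+0))⁻¹ = b⁻¹ := by norm_num
  rw [hp]
  linear_combination ((x^(p+2))⁻¹) * hbb

lemma sumY0 (b x : ℝ) (hb : b ≠ 0) (q : ℕ) :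
    b * ∑ s ∈ range (q+2), (((0+s).choose s : ℝ)) * (b^(0+1+s))⁻¹ * (x^(q+2-s))⁻¹ =
      (∑ s ∈ range (q+1), (((0+s).choose s : ℝ)) * (b^(0+1+s))⁻¹ * (x^(q+1-s))⁻¹) + (x^(q+2))⁻¹ := by
  have hbb : b * b⁻¹ = 1 := mul_inv_cancel₀ hb
  rw [Finset.mul_sum, Finset.sum_range_succ' (fun s => b * ((((0+s).choose s : ℝ)) * (b^(0+1+s))⁻¹ * (x^(q+2-s))⁻¹))]
  congr 1
  · apply Finset.sum_congr rfl
    intro s _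
    have h2 : q+2-(s+1) = q+1-s := by omega
    have hp : (b^(0+1+(s+1)))⁻¹ = (b^(0+1+s))⁻¹ * b⁻¹ := by
      rw [show 0+1+(s+1) = (0+1+s)+1 by omega, pow_succ, mul_inv]
    rw [h2, hp]
    simp only [Nat.zero_add, Nat.choose_self, Nat.cast_one]
    linear_combination ((b^(0+1+s))⁻¹ * (x^(q+1-s))⁻¹) * hbb
  · simp only [Nat.add_zero, Nat.sub_zero, Nat.zero_add, Nat.choose_self, Nat.cast_one]
    have hp : (b^(1+0))⁻¹ = b⁻¹ := by norm_num
    rw [hp]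
    linear_combination ((x^(q+2))⁻¹) * hbb

lemma Frec (b x : ℝ) (hb : b ≠ 0) (hx : x ≠ 0) (hxb : x + b ≠ 0) (P Q : ℕ) :
    (x^(P+1) * (x+b)^(Q+1))⁻¹ = b⁻¹ * ((x^(P+1) * (x+b)^Q)⁻¹ - (x^P * (x+b)^(Q+1))⁻¹) := by
  have h1 : x^(P+1) = x^P * x := pow_succ x P
  have h2 : (x+b)^(Q+1) = (x+b)^Q * (x+b) := pow_succ (x+b) Q
  rw [h1, h2]
  field_simp
  ring

lemma PF (b x : ℝ) (hb : b ≠ 0) (hx : x ≠ 0) (hxb : x + b ≠ 0) (p q : ℕ) :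
    (x ^ (p+1) * (x + b) ^ (q+1))⁻¹ =
      (∑ s ∈ range (p+1), (-1:ℝ)^s * ((q+s).choose s) * (b^(q+1+s))⁻¹ * (x^(p+1-s))⁻¹)
      + (-1:ℝ)^(p+1) * ∑ s ∈ range (q+1), (((p+s).choose s : ℝ)) * (b^(p+1+s))⁻¹ * ((x+b)^(q+1-s))⁻¹ := by
  have hbb : b * b⁻¹ = 1 := mul_inv_cancel₀ hb
  induction p generalizing q with
  | zero =>
    induction q with
    | zero =>
      simp only [show (0:ℕ)+1 = 1 from rfl, Finset.sum_range_one, pow_one, pow_zero, one_mul,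
        Nat.add_zero, Nat.sub_zero, Nat.choose_zero_right, Nat.cast_one, Nat.zero_add]
      field_simp
      ring
    | succ q ihq =>
      rw [Frec b x hb hx hxb 0 (q+1), ihq, inv_mul_eq_div, div_eq_iff hb]
      simp only [show q+1+1 = q+2 from rfl, pow_zero, one_mul]
      have e0 : ∑ s ∈ range (0+1), (-1:ℝ)^s * ((q+s).choose s) * (b^(q+1+s))⁻¹ * (x^(0+1-s))⁻¹
          = (b^(q+1))⁻¹ * x⁻¹ := by simp
      have e1 : ∑ s ∈ range (0+1), (-1:ℝ)^s * ((q+1+s).choose s) * (b^(q+2+s))⁻¹ * (x^(0+1-s))⁻¹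
          = (b^(q+2))⁻¹ * x⁻¹ := by simp
      rw [e0, e1]
      have hY := sumY0 b (x+b) hb q
      have hc : b * (b^(q+2))⁻¹ = (b^(q+1))⁻¹ := by
        rw [show q+2 = (q+1)+1 from rfl, pow_succ, mul_inv]
        linear_combination ((b^(q+1))⁻¹) * hbb
      linear_combination -x⁻¹ * hc + hY
  | succ p ihp =>
    induction q with
    | zero =>
      rw [Frec b x hb hx hxb (p+1) 0, ihp 0, inv_mul_eq_div, div_eq_iff hb]
      simp only [show p+1+1 = p+2 from rfl, pow_zero, mul_one]
      have e0 : ∑ s ∈ range (0+1), (((p+s).choose s : ℝ)) * (b^(p+1+s))⁻¹ * ((x+b)^(0+1-s))⁻¹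
          = (b^(p+1))⁻¹ * (x+b)⁻¹ := by simp
      have e1 : ∑ s ∈ range (0+1), (((p+1+s).choose s : ℝ)) * (b^(p+2+s))⁻¹ * ((x+b)^(0+1-s))⁻¹
          = (b^(p+2))⁻¹ * (x+b)⁻¹ := by simp
      rw [e0, e1]
      have hX := sumX0 b x hb p
      have hc : b * (b^(p+2))⁻¹ = (b^(p+1))⁻¹ := by
        rw [show p+2 = (p+1)+1 from rfl, pow_succ, mul_inv]
        linear_combination ((b^(p+1))⁻¹) * hbb
      linear_combination -hX - (-1:ℝ)^(p+2) * (x+b)⁻¹ * hc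
    | succ q ihq =>
      rw [Frec b x hb hx hxb (p+1) (q+1), ihq, ihp (q+1), inv_mul_eq_div, div_eq_iff hb]
      simp only [show p+1+1 = p+2 from rfl, show q+1+1 = q+2 from rfl]
      have hX := sumX b x hb p q
      have hY := sumY b (x+b) hb p q
      linear_combination -hX - (-1:ℝ)^(p+2) * hY

/-! ### Analytic lemmas -/

lemma per (k n : ℕ) (u : ℝ) : Real.sin (u + π * n) ^ (2*k) = Real.sin u ^ (2*k) := by
  rw [show π * (n:ℝ) = (n:ℝ) * π by ring, Real.sin_add_nat_mul_pi, mul_pow, ← pow_mul,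
    show n * (2*k) = 2 * (n*k) by ring, pow_mul]
  norm_num

lemma abs_per (n : ℕ) (u : ℝ) : |Real.sin (u + π * n)| = |Real.sin u| := by
  rw [show π * (n:ℝ) = (n:ℝ) * π by ring, Real.sin_add_nat_mul_pi, abs_mul, abs_pow, abs_neg,
    abs_one, one_pow, one_mul]

lemma sin_npi (n : ℕ) : Real.sin (-(π * n)) = 0 := by
  rw [Real.sin_neg, show π * (n:ℝ) = (n:ℝ) * π by ring, Real.sin_nat_mul_pi, neg_zero]

lemma bound1 (k j : ℕ) (hk : 1 ≤ k) (hjk : j ≤ 2*k) (u : ℝ) : |Real.sin u ^ (2*k) / u ^ j| ≤ 1 := by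
  rcases eq_or_ne u 0 with rfl | hu
  · have h2k : 2*k ≠ 0 := by omega
    simp [Real.sin_zero, zero_pow h2k]
  · rw [abs_div, abs_pow, abs_pow]
    rcases le_total |u| 1 with h1 | h1
    · rw [div_le_one (by positivity)]
      calc |Real.sin u| ^ (2*k) ≤ |u| ^ (2*k) :=
            pow_le_pow_left₀ (abs_nonneg _) (Real.abs_sin_le_abs) _
        _ ≤ |u| ^ j := pow_le_pow_of_le_one (abs_nonneg _) h1 hjk
    · rw [div_le_one (by positivity)]
      calc |Real.sin u| ^ (2*k) ≤ 1 ^ (2*k) :=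
            pow_le_pow_left₀ (abs_nonneg _) (Real.abs_sin_le_one u) _
        _ = 1 := one_pow _
        _ ≤ |u| ^ j := one_le_pow₀ h1

lemma bound2 (k j : ℕ) (h2 : 2 ≤ j) (hjk : j ≤ 2*k) (u : ℝ) :
    |Real.sin u ^ (2*k) / u ^ j| ≤ 2 * (1 + u^2)⁻¹ := by
  have hq : (0:ℝ) < 1 + u^2 := by positivity
  rcases eq_or_ne u 0 with rfl | hu
  · have h2k : 2*k ≠ 0 := by omega
    simp only [Real.sin_zero, zero_pow h2k, zero_div, abs_zero]
    positivity
  · rw [abs_div, abs_pow, abs_pow]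
    have hup : (0:ℝ) < |u| ^ j := by positivity
    rw [div_le_iff₀ hup]
    have hr : 2*(1+u^2)⁻¹*|u|^j = (2*|u|^j) / (1+u^2) := by field_simp
    rw [hr, le_div_iff₀ hq]
    have huu : |u|^2 = u^2 := sq_abs u
    rcases le_total |u| 1 with h1 | h1
    · have hs : |Real.sin u|^(2*k) ≤ |u|^j :=
        (pow_le_pow_left₀ (abs_nonneg _) Real.abs_sin_le_abs _).trans
          (pow_le_pow_of_le_one (abs_nonneg _) h1 hjk)
      have hsq : u^2 ≤ 1 := by
        rw [← huu]; exact pow_le_one₀ (abs_nonneg _) h1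
      nlinarith [pow_nonneg (abs_nonneg (Real.sin u)) (2*k), pow_nonneg (abs_nonneg u) j]
    · have hs : |Real.sin u|^(2*k) ≤ 1 := pow_le_one₀ (abs_nonneg _) (Real.abs_sin_le_one u)
      have hu2 : u^2 ≤ |u|^j := by
        rw [← huu]; exact pow_le_pow_right₀ h1 h2
      nlinarith [pow_nonneg (abs_nonneg u) j, sq_nonneg u]

lemma sinc_sq (u : ℝ) : Real.sin u ^ 2 / u ^ 2 ≤ 2 * (1 + u^2)⁻¹ := by
  have hq : (0:ℝ) < 1 + u^2 := by positivity
  rcases eq_or_ne u 0 with rfl | hu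
  · simp only [Real.sin_zero, ne_eq, OfNat.ofNat_ne_zero, not_false_eq_true, zero_pow, zero_div]
    positivity
  · have hup : (0:ℝ) < u ^ 2 := by positivity
    rw [div_le_iff₀ hup]
    have hr : 2*(1+u^2)⁻¹*u^2 = (2*u^2) / (1+u^2) := by field_simp
    rw [hr, le_div_iff₀ hq]
    have hs2 : Real.sin u ^ 2 ≤ u^2 := Real.sin_sq_le_sq
    have hs1 : Real.sin u ^ 2 ≤ 1 := Real.sin_sq_le_one u
    rcases le_total (u^2) 1 with h1 | h1
    · nlinarith
    · nlinarith

lemma meas0 (k j : ℕ) : Measurable (fun u : ℝ => Real.sin u ^ (2*k) / u ^ j) :=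
  (Real.measurable_sin.pow_const _).div (measurable_id.pow_const j)

lemma measb (k j : ℕ) (c : ℝ) : Measurable (fun u : ℝ => Real.sin u ^ (2*k) / (u + c) ^ j) :=
  (Real.measurable_sin.pow_const _).div ((measurable_id.add_const c).pow_const j)

lemma int_pure (k j : ℕ) (h2 : 2 ≤ j) (hjk : j ≤ 2*k) :
    Integrable (fun u : ℝ => Real.sin u ^ (2*k) / u ^ j) := by
  refine Integrable.mono' (integrable_inv_one_add_sq.const_mul 2) (meas0 k j).aestronglyMeasurable ?_
  filter_upwards with u
  rw [Real.norm_eq_abs]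
  exact bound2 k j h2 hjk u

lemma int_shift (k j n : ℕ) (h2 : 2 ≤ j) (hjk : j ≤ 2*k) :
    Integrable (fun u : ℝ => Real.sin u ^ (2*k) / (u + π*n) ^ j) := by
  have h := (int_pure k j h2 hjk).comp_add_right (π*n)
  refine h.congr ?_
  filter_upwards with u
  rw [per k n u]

lemma integral_shift (k j n : ℕ) :
    (∫ u : ℝ, Real.sin u ^ (2*k) / (u + π*n) ^ j) = ∫ u : ℝ, Real.sin u ^ (2*k) / u ^ j := by
  have : (fun u : ℝ => Real.sin u ^ (2*k) / (u + π*n) ^ j)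
      = fun u : ℝ => Real.sin (u + π*n) ^ (2*k) / (u + π*n) ^ j := by
    funext u; rw [per k n u]
  rw [this]
  exact integral_add_right_eq_self (fun u : ℝ => Real.sin u ^ (2*k) / u ^ j) (π*n)

lemma ii0 (k j : ℕ) (hk : 1 ≤ k) (hjk : j ≤ 2*k) (A B : ℝ) :
    IntervalIntegrable (fun u : ℝ => Real.sin u ^ (2*k) / u ^ j) volume A B := by
  rw [intervalIntegrable_iff]
  refine Integrable.mono' (g := fun _ => (1:ℝ)) ?_ (meas0 k j).aestronglyMeasurable.restrict ?_
  · exact (integrableOn_const_iff).mpr (Or.inr measure_Ioc_lt_top)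
  · filter_upwards with u
    rw [Real.norm_eq_abs]
    exact bound1 k j hk hjk u

lemma iib (k j n : ℕ) (hk : 1 ≤ k) (hjk : j ≤ 2*k) (A B : ℝ) :
    IntervalIntegrable (fun u : ℝ => Real.sin u ^ (2*k) / (u + π*n) ^ j) volume A B := by
  have h := (ii0 k j hk hjk (A + π*n) (B + π*n)).comp_add_right (π*n)
  rw [add_sub_cancel_right, add_sub_cancel_right] at h
  have he : (fun u : ℝ => Real.sin (u + π*n) ^ (2*k) / (u + π*n) ^ j)
      = fun u : ℝ => Real.sin u ^ (2*k) / (u + π*n) ^ j := by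
    funext u; rw [per k n u]
  rwa [he] at h

lemma odd_sym (k j : ℕ) (hj : Odd j) (R : ℝ) :
    (∫ u in (-R)..R, Real.sin u ^ (2*k) / u ^ j) = 0 := by
  have hodd : ∀ u : ℝ, Real.sin (-u) ^ (2*k) / (-u) ^ j
      = -(Real.sin u ^ (2*k) / u ^ j) := by
    intro u
    rw [Real.sin_neg, Even.neg_pow (by exact even_two_mul k), hj.neg_pow, div_neg]
  have h := intervalIntegral.integral_comp_neg (a := -R) (b := R)
    (fun u : ℝ => Real.sin u ^ (2*k) / u ^ j)
  simp only [neg_neg] at h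
  simp only [hodd] at h
  rw [intervalIntegral.integral_neg] at h
  linarith [h]

lemma frac_le (N D c : ℝ) (hN : 0 ≤ N) (hN1 : N ≤ 1) (hc : 0 < c) (hD : c ≤ D) :
    N / D ≤ c⁻¹ := by
  rw [← one_div, div_le_div_iff₀ (by linarith) hc]
  nlinarith

lemma tendsto_shift_zero (k j n : ℕ) (hk : 1 ≤ k) (hn : 1 ≤ n) (hj1 : 1 ≤ j) (hjk : j ≤ 2*k)
    (hodd : Odd j) :
    Filter.Tendsto (fun R : ℝ => ∫ u in (-R)..R, Real.sin u ^ (2*k) / (u + π*n) ^ j)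
      Filter.atTop (nhds 0) := by
  have hb : 0 < π*(n:ℝ) := by
    have h0 : (0:ℝ) < (n:ℝ) := by exact_mod_cast hn
    positivity
  set b : ℝ := π*n with hbdef
  have key : ∀ R : ℝ, (∫ u in (-R)..R, Real.sin u ^ (2*k) / (u + b) ^ j)
      = (∫ u in (-R+b)..(-R), Real.sin u ^ (2*k) / u ^ j)
        + ∫ u in R..(R+b), Real.sin u ^ (2*k) / u ^ j := by
    intro R
    have he : (fun u : ℝ => Real.sin u ^ (2*k) / (u + b) ^ j)
        = fun u : ℝ => Real.sin (u + b) ^ (2*k) / (u + b) ^ j := by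
      funext u; rw [hbdef, per k n u]
    rw [he]
    rw [intervalIntegral.integral_comp_add_right (fun u : ℝ => Real.sin u ^ (2*k) / u ^ j) b]
    have h1 : (∫ u in (-R+b)..(-R), Real.sin u ^ (2*k) / u ^ j)
        + (∫ u in (-R)..(R+b), Real.sin u ^ (2*k) / u ^ j)
        = ∫ u in (-R+b)..(R+b), Real.sin u ^ (2*k) / u ^ j :=
      intervalIntegral.integral_add_adjacent_intervals (ii0 k j hk hjk _ _) (ii0 k j hk hjk _ _)
    have h2 : (∫ u in (-R)..R, Real.sin u ^ (2*k) / u ^ j)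
        + (∫ u in R..(R+b), Real.sin u ^ (2*k) / u ^ j)
        = ∫ u in (-R)..(R+b), Real.sin u ^ (2*k) / u ^ j :=
      intervalIntegral.integral_add_adjacent_intervals (ii0 k j hk hjk _ _) (ii0 k j hk hjk _ _)
    rw [odd_sym k j hodd R, zero_add] at h2
    rw [← h1, ← h2]
  have hbound : ∀ᶠ R : ℝ in Filter.atTop,
      ‖(∫ u in (-R)..R, Real.sin u ^ (2*k) / (u + b) ^ j)‖ ≤ b * (R - b)⁻¹ + b * R⁻¹ := by
    filter_upwards [Filter.eventually_ge_atTop (b + 1)] with R hR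
    have hR1 : (1:ℝ) ≤ R - b := by linarith
    have hRpos : (1:ℝ) ≤ R := by linarith
    have hRb : (0:ℝ) < R - b := by linarith
    rw [key R]
    have t1 : ‖∫ u in (-R+b)..(-R), Real.sin u ^ (2*k) / u ^ j‖ ≤ (R-b)⁻¹ * |(-R) - (-R+b)| := by
      apply intervalIntegral.norm_integral_le_of_norm_le_const
      intro u hu
      rw [Set.uIoc_of_ge (by linarith)] at hu
      have hu1 : R - b ≤ |u| := by
        rw [abs_of_nonpos (by linarith [hu.2])]
        linarith [hu.2]
      rw [Real.norm_eq_abs, abs_div, abs_pow, abs_pow]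
      have hd : (R-b) ≤ |u|^j := by
        calc (R-b) = (R-b)^1 := (pow_one _).symm
          _ ≤ (R-b)^j := pow_le_pow_right₀ hR1 hj1
          _ ≤ |u|^j := pow_le_pow_left₀ (by linarith) hu1 j
      exact frac_le _ _ _ (by positivity) (pow_le_one₀ (abs_nonneg _) (Real.abs_sin_le_one u)) hRb hd
    have t2 : ‖∫ u in R..(R+b), Real.sin u ^ (2*k) / u ^ j‖ ≤ R⁻¹ * |(R+b) - R| := by
      apply intervalIntegral.norm_integral_le_of_norm_le_const
      intro u hu
      rw [Set.uIoc_of_le (by linarith)] at hu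
      have hu1 : R ≤ |u| := by
        rw [abs_of_pos (by linarith [hu.1])]
        linarith [hu.1]
      rw [Real.norm_eq_abs, abs_div, abs_pow, abs_pow]
      have hd : R ≤ |u|^j := by
        calc R = R^1 := (pow_one _).symm
          _ ≤ R^j := pow_le_pow_right₀ hRpos hj1
          _ ≤ |u|^j := pow_le_pow_left₀ (by linarith) hu1 j
      exact frac_le _ _ _ (by positivity) (pow_le_one₀ (abs_nonneg _) (Real.abs_sin_le_one u))
        (by linarith) hd
    have habs1 : |(-R) - (-R+b)| = b := by
      rw [abs_of_nonpos (by linarith)]; ring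
    have habs2 : |(R+b) - R| = b := by
      rw [abs_of_nonneg (by linarith)]; ring
    rw [habs1] at t1
    rw [habs2] at t2
    calc ‖(∫ u in (-R+b)..(-R), Real.sin u ^ (2*k) / u ^ j)
          + ∫ u in R..(R+b), Real.sin u ^ (2*k) / u ^ j‖
        ≤ ‖∫ u in (-R+b)..(-R), Real.sin u ^ (2*k) / u ^ j‖
          + ‖∫ u in R..(R+b), Real.sin u ^ (2*k) / u ^ j‖ := norm_add_le _ _
      _ ≤ (R-b)⁻¹ * b + R⁻¹ * b := add_le_add t1 t2
      _ = b * (R-b)⁻¹ + b * R⁻¹ := by ring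
  apply squeeze_zero_norm' hbound
  have l1 : Filter.Tendsto (fun R : ℝ => b * (R - b)⁻¹) Filter.atTop (nhds 0) := by
    have : Filter.Tendsto (fun R : ℝ => R - b) Filter.atTop Filter.atTop :=
      Filter.tendsto_atTop_add_const_right _ (-b) Filter.tendsto_id
    simpa using (this.inv_tendsto_atTop).const_mul b
  have l2 : Filter.Tendsto (fun R : ℝ => b * R⁻¹) Filter.atTop (nhds 0) := by
    simpa using tendsto_inv_atTop_zero.const_mul b
  simpa using l1.add l2

lemma int_h1 (k n : ℕ) (hk : 1 ≤ k) (hn : 1 ≤ n) :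
    Integrable (fun u : ℝ =>
      Real.sin u ^ (2*k) / u ^ 1 - Real.sin u ^ (2*k) / (u + π*n) ^ 1) := by
  have hb : 0 < π*(n:ℝ) := by
    have h0 : (0:ℝ) < (n:ℝ) := by exact_mod_cast hn
    positivity
  set b : ℝ := π*n with hbdef
  have h2k : 2*k ≠ 0 := by omega
  have hg : Integrable (fun u : ℝ => b * ((1+u^2)⁻¹ + (1+(u+b)^2)⁻¹)) := by
    exact (integrable_inv_one_add_sq.add (integrable_inv_one_add_sq.comp_add_right b)).const_mul b
  refine hg.mono' ((meas0 k 1).sub (measb k 1 b)).aestronglyMeasurable ?_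
  filter_upwards with u
  rcases eq_or_ne u 0 with rfl | hu
  · simp only [Real.sin_zero, zero_pow h2k, zero_div, sub_zero, norm_zero]
    positivity
  rcases eq_or_ne (u + b) 0 with hub | hub
  · have hsu : Real.sin u = 0 := by
      have : u = -b := by linarith
      rw [this, hbdef]; exact sin_npi n
    simp only [hsu, zero_pow h2k, zero_div, sub_zero, norm_zero]
    positivity
  · have e1 : Real.sin u ^(2*k)/u^1 - Real.sin u^(2*k)/(u+b)^1
        = Real.sin u^(2*k) * (b/(u*(u+b))) := by
      field_simp
      ring
    rw [Real.norm_eq_abs, e1, abs_mul, abs_pow, abs_div, abs_of_pos hb, abs_mul u (u+b)]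
    have hau : 0 < |u| := abs_pos.mpr hu
    have haub : 0 < |u+b| := abs_pos.mpr hub
    have hsb : |Real.sin (u+b)| = |Real.sin u| := by rw [hbdef]; exact abs_per n u
    have h2 : |Real.sin u|^(2*k) ≤ |Real.sin u| * |Real.sin (u+b)| := by
      rw [hsb]
      calc |Real.sin u|^(2*k) ≤ |Real.sin u|^2 :=
            pow_le_pow_of_le_one (abs_nonneg _) (Real.abs_sin_le_one u) (by omega)
        _ = |Real.sin u| * |Real.sin u| := pow_two _
    have hX2 : ( |Real.sin u|/|u|)^2 ≤ 2*(1+u^2)⁻¹ := by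
      rw [div_pow, sq_abs, sq_abs]; exact sinc_sq u
    have hY2 : ( |Real.sin (u+b)|/|u+b|)^2 ≤ 2*(1+(u+b)^2)⁻¹ := by
      rw [div_pow, sq_abs, sq_abs]; exact sinc_sq (u+b)
    have hprod : ( |Real.sin u|/|u|) * ( |Real.sin (u+b)|/|u+b|)
        ≤ (1+u^2)⁻¹ + (1+(u+b)^2)⁻¹ := by
      nlinarith [sq_nonneg ( |Real.sin u|/|u| - |Real.sin (u+b)|/|u+b|)]
    calc |Real.sin u|^(2*k) * (b/( |u| * |u+b|))
        ≤ ( |Real.sin u| * |Real.sin (u+b)|) * (b/( |u| * |u+b|)) := by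
          apply mul_le_mul_of_nonneg_right h2 (by positivity)
      _ = b * (( |Real.sin u|/|u|) * ( |Real.sin (u+b)|/|u+b|)) := by
          field_simp
      _ ≤ b * ((1+u^2)⁻¹ + (1+(u+b)^2)⁻¹) := mul_le_mul_of_nonneg_left hprod hb.le

lemma int_hj (k j n : ℕ) (hk : 1 ≤ k) (hn : 1 ≤ n) (hj1 : 1 ≤ j) (hjk : j ≤ 2*k) :
    Integrable (fun u : ℝ =>
      Real.sin u ^ (2*k) / u ^ j - Real.sin u ^ (2*k) / (u + π*n) ^ j) := by
  obtain rfl | h2 : j = 1 ∨ 2 ≤ j := by omega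
  · exact int_h1 k n hk hn
  · exact (int_pure k j h2 hjk).sub (int_shift k j n h2 hjk)

lemma odd_zero (k j n : ℕ) (hk : 1 ≤ k) (hn : 1 ≤ n) (hj1 : 1 ≤ j) (hjk : j ≤ 2*k)
    (hodd : Odd j) :
    (∫ u : ℝ, (Real.sin u ^ (2*k) / u ^ j - Real.sin u ^ (2*k) / (u + π*n) ^ j)) = 0 := by
  have hint := int_hj k j n hk hn hj1 hjk
  have t1 := intervalIntegral_tendsto_integral hint Filter.tendsto_neg_atTop_atBot Filter.tendsto_id
  have t2 : Filter.Tendsto (fun R : ℝ => ∫ u in (-R)..R,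
      (Real.sin u ^ (2*k) / u ^ j - Real.sin u ^ (2*k) / (u + π*n) ^ j))
      Filter.atTop (nhds 0) := by
    have he : ∀ R : ℝ, (∫ u in (-R)..R,
        (Real.sin u ^ (2*k) / u ^ j - Real.sin u ^ (2*k) / (u + π*n) ^ j))
        = -(∫ u in (-R)..R, Real.sin u ^ (2*k) / (u + π*n) ^ j) := by
      intro R
      rw [intervalIntegral.integral_sub (ii0 k j hk hjk _ _) (iib k j n hk hjk _ _),
        odd_sym k j hodd R, zero_sub]
    simp only [he]
    simpa using (tendsto_shift_zero k j n hk hn hj1 hjk hodd).neg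
  exact tendsto_nhds_unique t1 t2

lemma sum_split (g : ℕ → ℝ) (k : ℕ) :
    ∑ s ∈ range (2*k), g s = ∑ j ∈ range k, (g (2*j) + g (2*j+1)) := by
  induction k with
  | zero => simp
  | succ k ih =>
    rw [show 2*(k+1) = (2*k+1)+1 by omega, Finset.sum_range_succ, Finset.sum_range_succ,
      Finset.sum_range_succ, ih]
    ring

end InkAux

open InkAux

theorem Ink_reduction (n k : ℕ) (hn : 1 ≤ n) (hk : 1 ≤ k) :
    ∫ t : ℝ, (Real.sin (t - π * n / 2) ^ 2 / (t ^ 2 - π ^ 2 * n ^ 2 / 4) ^ 2) ^ k =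
      ((π * n) ^ (2 * k))⁻¹ *
        ∑ j ∈ Finset.range k,
          2 * ((π * n) ^ (2 * j))⁻¹ * (Nat.choose (2 * j + 2 * k - 1) (2 * k - 1)) *
            ∫ u : ℝ, Real.sin u ^ (2 * k) / u ^ (2 * (k - j)) := by
  have hπ : (0:ℝ) < π := Real.pi_pos
  have hnR : (0:ℝ) < (n:ℝ) := by exact_mod_cast hn
  have hb : (0:ℝ) < π*n := by positivity
  have hbne : (π*(n:ℝ)) ≠ 0 := hb.ne'
  have h2k : 2*k ≠ 0 := by omega
  -- Step 1: translation
  have step1 : (∫ t : ℝ, (Real.sin (t - π * n / 2) ^ 2 / (t ^ 2 - π ^ 2 * n ^ 2 / 4) ^ 2) ^ k)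
      = ∫ u : ℝ, Real.sin u ^ (2*k) / (u^(2*k) * (u + π*n)^(2*k)) := by
    rw [← integral_add_right_eq_self
      (fun t : ℝ => (Real.sin (t - π * n / 2) ^ 2 / (t ^ 2 - π ^ 2 * n ^ 2 / 4) ^ 2) ^ k) (π*n/2)]
    congr 1
    funext u
    have h1 : (u + π*n/2) - π*n/2 = u := by ring
    have h2 : (u + π*(n:ℝ)/2)^2 - π^2*(n:ℝ)^2/4 = u * (u + π*n) := by ring
    show (Real.sin ((u + π*n/2) - π * n / 2) ^ 2 / (((u + π*n/2)) ^ 2 - π ^ 2 * n ^ 2 / 4) ^ 2) ^ k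
      = Real.sin u ^ (2*k) / (u^(2*k) * (u + π*n)^(2*k))
    rw [h1, h2, div_pow, ← pow_mul, ← pow_mul, mul_pow]
  rw [step1]
  -- Step 2: pointwise decomposition
  have hdecomp : ∀ u : ℝ, Real.sin u ^ (2*k) / (u^(2*k) * (u + π*n)^(2*k))
      = ∑ s ∈ range (2*k), (((2*k-1+s).choose s : ℝ)) * (((π*n)^(2*k+s))⁻¹)
          * ((-1:ℝ)^s * (Real.sin u ^ (2*k) / u ^ (2*k-s))
              + Real.sin u ^ (2*k) / (u + π*n) ^ (2*k-s)) := by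
    intro u
    rcases eq_or_ne u 0 with rfl | hu
    · simp [Real.sin_zero, zero_pow h2k]
    rcases eq_or_ne (u + π*(n:ℝ)) 0 with hub | hub
    · have hsu : Real.sin u = 0 := by
        have hueq : u = -(π*(n:ℝ)) := by linarith
        rw [hueq]; exact sin_npi n
      simp [hsu, zero_pow h2k]
    · have hPF := PF (π*n) u hbne hu hub (2*k-1) (2*k-1)
      rw [show 2*k-1+1 = 2*k by omega] at hPF
      rw [show ((-1:ℝ))^(2*k) = 1 by rw [pow_mul]; norm_num, one_mul] at hPF
      rw [show Real.sin u ^ (2*k) / (u^(2*k) * (u + π*n)^(2*k))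
          = Real.sin u ^ (2*k) * (u^(2*k) * (u + π*↑n)^(2*k))⁻¹ from div_eq_mul_inv _ _]
      rw [hPF, mul_add, Finset.mul_sum, Finset.mul_sum, ← Finset.sum_add_distrib]
      apply Finset.sum_congr rfl
      intro s hs
      ring
  simp only [hdecomp]
  -- Step 3: integrability of summands
  have hsummand : ∀ s ∈ range (2*k), Integrable (fun u : ℝ =>
      (((2*k-1+s).choose s : ℝ)) * (((π*n)^(2*k+s))⁻¹)
      * ((-1:ℝ)^s * (Real.sin u ^ (2*k) / u ^ (2*k-s))
          + Real.sin u ^ (2*k) / (u + π*n) ^ (2*k-s))) := by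
    intro s hs
    have hslt : s < 2*k := Finset.mem_range.mp hs
    apply Integrable.const_mul
    by_cases h1 : 2*k - s = 1
    · rw [h1]
      have hsodd : Odd s := Nat.odd_iff.mpr (by omega)
      have heq : (fun u : ℝ => (-1:ℝ)^s * (Real.sin u^(2*k)/u^1)
            + Real.sin u^(2*k)/(u+π*n)^1)
          = fun u : ℝ => (-1:ℝ) * (Real.sin u^(2*k)/u^1 - Real.sin u^(2*k)/(u+π*n)^1) := by
        funext u
        rw [hsodd.neg_one_pow]
        ring
      rw [heq]
      exact (int_h1 k n hk hn).const_mul _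
    · have h2 : 2 ≤ 2*k - s := by omega
      exact (((int_pure k _ h2 (by omega)).const_mul _).add (int_shift k _ n h2 (by omega)))
  rw [MeasureTheory.integral_finset_sum (range (2*k)) hsummand]
  rw [sum_split (fun s => ∫ u : ℝ, (((2*k-1+s).choose s : ℝ)) * (((π*n)^(2*k+s))⁻¹)
      * ((-1:ℝ)^s * (Real.sin u ^ (2*k) / u ^ (2*k-s))
          + Real.sin u ^ (2*k) / (u + π*n) ^ (2*k-s))) k]
  rw [Finset.mul_sum]
  apply Finset.sum_congr rfl
  intro j hj
  have hjk : j < k := Finset.mem_range.mp hj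
  -- odd summand vanishes
  have hodd : (∫ u : ℝ, (((2*k-1+(2*j+1)).choose (2*j+1) : ℝ)) * (((π*n)^(2*k+(2*j+1)))⁻¹)
      * ((-1:ℝ)^(2*j+1) * (Real.sin u ^ (2*k) / u ^ (2*k-(2*j+1)))
          + Real.sin u ^ (2*k) / (u + π*n) ^ (2*k-(2*j+1)))) = 0 := by
    rw [MeasureTheory.integral_const_mul]
    have hm : ((-1:ℝ))^(2*j+1) = -1 := by
      rw [pow_succ, pow_mul]; norm_num
    have heq : (fun u : ℝ => (-1:ℝ)^(2*j+1) * (Real.sin u^(2*k)/u^(2*k-(2*j+1)))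
          + Real.sin u^(2*k)/(u+π*n)^(2*k-(2*j+1)))
        = fun u : ℝ => -(Real.sin u^(2*k)/u^(2*k-(2*j+1))
            - Real.sin u^(2*k)/(u+π*n)^(2*k-(2*j+1))) := by
      funext u
      rw [hm]
      ring
    rw [heq, MeasureTheory.integral_neg,
      odd_zero k (2*k-(2*j+1)) n hk hn (by omega) (by omega) (Nat.odd_iff.mpr (by omega)),
      neg_zero, mul_zero]
  rw [hodd, add_zero]
  -- even summand
  rw [MeasureTheory.integral_const_mul]
  have hm : ((-1:ℝ))^(2*j) = 1 := by rw [pow_mul]; norm_num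
  simp only [hm, one_mul]
  have h2 : 2 ≤ 2*k - 2*j := by omega
  have hJk : 2*k - 2*j ≤ 2*k := by omega
  rw [MeasureTheory.integral_add (int_pure k _ h2 hJk) (int_shift k _ n h2 hJk)]
  rw [integral_shift k (2*k-2*j) n]
  -- match with target
  simp only [show 2*(k-j) = 2*k-2*j by omega]
  have hC : (2*k-1+2*j).choose (2*j) = (2*j+2*k-1).choose (2*k-1) := by
    have h1 : 2*k-1+2*j = 2*j+2*k-1 := by omega
    have h3 : (2*j+2*k-1) - (2*k-1) = 2*j := by omega
    calc (2*k-1+2*j).choose (2*j) = (2*j+2*k-1).choose ((2*j+2*k-1)-(2*k-1)) := by rw [h1, h3]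
      _ = (2*j+2*k-1).choose (2*k-1) := Nat.choose_symm (by omega)
  rw [hC]
  rw [show ((π*(n:ℝ))^(2*k+2*j))⁻¹ = ((π*(n:ℝ))^(2*k))⁻¹ * ((π*(n:ℝ))^(2*j))⁻¹ by
    rw [pow_add, mul_inv]]
  ring
end
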